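/- arXiv:0904.0158 — 3 statements merged into one kernel-verified Lean document; each statement's English description precedes it below -/
import Mathlib

section
/- Let H be a complex Hilbert space, Ω ∈ H, and T > 0. Let L : [0,T] → B(H) be a family of bounded self-adjoint operators on H such that t ↦ L(t)Ω is continuous, and let χ : [0,T] → ℝ be continuous. Suppose Ψ : [0,T] → H is differentiable with Ψ(0) = Ω and Ψ'(t) = i·(L(t)Ψ(t) − χ(t)Ψ(t)) for all t ∈ [0,T]. Then for every t ∈ [0,T], ‖ e^{i∫₀ᵗ χ(s) ds} · Ψ(t) − Ω ‖ ≤ ∫₀ᵗ ‖L(s)Ω‖ ds. -/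
open MeasureTheory
open scoped ComplexInnerProductSpace

/-- A square-root Grönwall-type lemma: if `q ≥ 0`, `q 0 = 0`, and `q` has (two-sided)
derivatives bounded by `2 √(q t) · h t` on `[0, T]`, then `√(q t) ≤ ∫₀ᵗ h`. -/
private lemma aux_sqrt_gronwall {T : ℝ} (hT : 0 < T) (q h : ℝ → ℝ) (hh : Continuous h)
    (hhnn : ∀ t, 0 ≤ h t) (hq0 : q 0 = 0) (hqnn : ∀ t ∈ Set.Icc (0 : ℝ) T, 0 ≤ q t)
    (hq : ∀ t ∈ Set.Icc (0 : ℝ) T, ∃ d, HasDerivAt q d t ∧ d ≤ 2 * Real.sqrt (q t) * h t) :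
    ∀ t ∈ Set.Icc (0 : ℝ) T, Real.sqrt (q t) ≤ ∫ s in (0 : ℝ)..t, h s := by
  intro t ht
  refine le_of_forall_pos_le_add fun ε hε => ?_
  set P : ℝ → ℝ := fun x => ∫ s in (0 : ℝ)..x, h s with hPdef
  have hPderiv : ∀ x : ℝ, HasDerivAt P (h x) x := fun x =>
    intervalIntegral.integral_hasDerivAt_right (hh.intervalIntegrable 0 x)
      (hh.stronglyMeasurableAtFilter _ _) hh.continuousAt
  set G : ℝ → ℝ := fun x => P x + ε - Real.sqrt (q x + ε ^ 2) with hGdef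
  have hGd : ∀ x ∈ Set.Icc (0 : ℝ) T, ∃ d, HasDerivAt G d x ∧ 0 ≤ d := by
    intro x hx
    obtain ⟨d, hd, hdle⟩ := hq x hx
    have hpos : 0 < q x + ε ^ 2 := by
      have := hqnn x hx; positivity
    have hs : HasDerivAt (fun y => Real.sqrt (q y + ε ^ 2))
        (1 / (2 * Real.sqrt (q x + ε ^ 2)) * d) x :=
      (Real.hasDerivAt_sqrt hpos.ne').comp x (hd.add_const _)
    refine ⟨h x - 1 / (2 * Real.sqrt (q x + ε ^ 2)) * d,
      ((hPderiv x).add_const ε).sub hs, ?_⟩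
    have hspos : 0 < Real.sqrt (q x + ε ^ 2) := Real.sqrt_pos.mpr hpos
    have hsq : Real.sqrt (q x) ≤ Real.sqrt (q x + ε ^ 2) :=
      Real.sqrt_le_sqrt (by nlinarith)
    have h2 : d ≤ 2 * Real.sqrt (q x + ε ^ 2) * h x := by
      have := hhnn x
      nlinarith [Real.sqrt_nonneg (q x)]
    rw [sub_nonneg, div_mul_eq_mul_div, one_mul, div_le_iff₀ (by linarith)]
    nlinarith
  have hmono : MonotoneOn G (Set.Icc (0 : ℝ) T) := by
    apply monotoneOn_of_deriv_nonneg (convex_Icc 0 T)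
    · intro x hx
      obtain ⟨d, hd, _⟩ := hGd x hx
      exact hd.continuousAt.continuousWithinAt
    · intro x hx
      obtain ⟨d, hd, _⟩ := hGd x (interior_subset hx)
      exact hd.differentiableAt.differentiableWithinAt
    · intro x hx
      obtain ⟨d, hd, hd0⟩ := hGd x (interior_subset hx)
      rw [hd.deriv]; exact hd0
  have h0mem : (0 : ℝ) ∈ Set.Icc (0 : ℝ) T := Set.left_mem_Icc.mpr hT.le
  have hG0t : G 0 ≤ G t := hmono h0mem ht ht.1
  have hG0 : G 0 = 0 := by
    simp [hGdef, hPdef, hq0, intervalIntegral.integral_same,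
      Real.sqrt_sq hε.le]
  have hkey : Real.sqrt (q t + ε ^ 2) ≤ P t + ε := by
    have : (0 : ℝ) ≤ G t := hG0 ▸ hG0t
    simp only [hGdef] at this
    linarith
  calc Real.sqrt (q t) ≤ Real.sqrt (q t + ε ^ 2) := Real.sqrt_le_sqrt (by nlinarith)
    _ ≤ P t + ε := hkey

/-- Abstract energy estimate: a unitary-type evolution generated by a self-adjoint
family `L`, corrected by a real scalar phase `χ`, stays within `∫ ‖L s Ω‖ ds`
of the initial vector `Ω`. -/
theorem stmt_0 {H : Type*} [NormedAddCommGroup H] [InnerProductSpace ℂ H] [CompleteSpace H]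
    (Ω : H) (T : ℝ) (hT : 0 < T)
    (L : ℝ → H →L[ℂ] H)
    (hLsa : ∀ t ∈ Set.Icc (0 : ℝ) T, IsSelfAdjoint (L t))
    (hLcont : ContinuousOn (fun t => L t Ω) (Set.Icc (0 : ℝ) T))
    (χ : ℝ → ℝ) (hχ : ContinuousOn χ (Set.Icc (0 : ℝ) T))
    (Ψ : ℝ → H) (hΨ0 : Ψ 0 = Ω)
    (hΨ : ∀ t ∈ Set.Icc (0 : ℝ) T,
      HasDerivAt Ψ (Complex.I • (L t (Ψ t) - (χ t : ℂ) • Ψ t)) t) :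
    ∀ t ∈ Set.Icc (0 : ℝ) T,
      ‖Complex.exp (Complex.I * Complex.ofReal (∫ s in (0 : ℝ)..t, χ s)) • Ψ t - Ω‖
        ≤ ∫ s in (0 : ℝ)..t, ‖L s Ω‖ := by
  -- Continuous extensions of `χ` and `s ↦ ‖L s Ω‖` to all of `ℝ` via projection to `[0, T]`.
  set π : ℝ → ℝ := fun x => (Set.projIcc (0 : ℝ) T hT.le x : ℝ) with hπdef
  have hπcont : Continuous π := continuous_subtype_val.comp continuous_projIcc
  have hπmem : ∀ x, π x ∈ Set.Icc (0 : ℝ) T := fun x => (Set.projIcc (0 : ℝ) T hT.le x).2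
  have hπeq : ∀ x ∈ Set.Icc (0 : ℝ) T, π x = x := fun x hx => by
    simp [hπdef, Set.projIcc_of_mem hT.le hx]
  set χe : ℝ → ℝ := fun x => χ (π x) with hχedef
  have hχecont : Continuous χe := hχ.comp_continuous hπcont hπmem
  set he : ℝ → ℝ := fun x => ‖L (π x) Ω‖ with hhedef
  have hecont : Continuous he := (hLcont.comp_continuous hπcont hπmem).norm
  have hennn : ∀ x, 0 ≤ he x := fun x => norm_nonneg _
  -- The accumulated phase.
  set θ : ℝ → ℝ := fun x => ∫ s in (0 : ℝ)..x, χe s with hθdef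
  have hθd : ∀ x : ℝ, HasDerivAt θ (χe x) x := fun x =>
    intervalIntegral.integral_hasDerivAt_right (hχecont.intervalIntegrable 0 x)
      (hχecont.stronglyMeasurableAtFilter _ _) hχecont.continuousAt
  -- The gauged evolution.
  set Φ : ℝ → H := fun x => Complex.exp (Complex.I * (θ x : ℂ)) • Ψ x with hΦdef
  have hΦd : ∀ t ∈ Set.Icc (0 : ℝ) T, HasDerivAt Φ (Complex.I • L t (Φ t)) t := by
    intro t ht
    have h1 : HasDerivAt (fun x => ((θ x : ℝ) : ℂ)) ((χ t : ℂ)) t := by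
      have hce : χe t = χ t := by
        show χ (π t) = χ t
        rw [hπeq t ht]
      have h := (hθd t).ofReal_comp
      rwa [hce] at h
    have h3 : HasDerivAt (fun x => Complex.exp (Complex.I * (θ x : ℂ)))
        (Complex.I * (χ t : ℂ) * Complex.exp (Complex.I * (θ t : ℂ))) t := by
      have := (h1.const_mul Complex.I).cexp
      convert this using 1
      ring
    have h4 := h3.smul (hΨ t ht)
    convert h4 using 1
    rw [hΦdef]
    show Complex.I • L t (Complex.exp (Complex.I * (θ t : ℂ)) • Ψ t) = Complex.exp (Complex.I * (θ t : ℂ)) • Complex.I • (L t (Ψ t) - (χ t : ℂ) • Ψ t) + (Complex.I * (χ t : ℂ) * Complex.exp (Complex.I * (θ t : ℂ))) • Ψ t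
    simp only [ContinuousLinearMap.map_smul, smul_sub, smul_smul]
    module
    rfl
  set u : ℝ → H := fun x => Φ x - Ω with hudef
  have hud : ∀ t ∈ Set.Icc (0 : ℝ) T, HasDerivAt u (Complex.I • L t (Φ t)) t :=
    fun t ht => (hΦd t ht).sub_const Ω
  set q : ℝ → ℝ := fun x => (⟪u x, u x⟫ : ℂ).re with hqdef
  have hqeq : ∀ x, q x = ‖u x‖ ^ 2 := fun x => by
    have := inner_self_eq_norm_sq (𝕜 := ℂ) (u x)
    simpa [hqdef] using this
  have hqnorm : ∀ x, Real.sqrt (q x) = ‖u x‖ := fun x => by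
    rw [hqeq x]; exact Real.sqrt_sq (norm_nonneg _)
  have hqnn : ∀ x ∈ Set.Icc (0 : ℝ) T, 0 ≤ q x := fun x _ => by
    rw [hqeq x]; positivity
  have hq0 : q 0 = 0 := by
    have hθ0 : θ 0 = 0 := intervalIntegral.integral_same
    have hΦ0 : Φ 0 = Ω := by
      rw [hΦdef]; simp [hθ0, hΨ0]
    simp [hqdef, hudef, hΦ0]
  -- Derivative bound for q.
  have hqd : ∀ t ∈ Set.Icc (0 : ℝ) T,
      ∃ d, HasDerivAt q d t ∧ d ≤ 2 * Real.sqrt (q t) * he t := by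
    intro t ht
    have hi := (hud t ht).inner ℂ (hud t ht)
    have hre := Complex.reCLM.hasFDerivAt.comp_hasDerivAt t hi
    refine ⟨_, hre, ?_⟩
    -- the derivative value is `re (⟪u t, w⟫ + ⟪w, u t⟫)` with `w = I • L t (Φ t)`
    have hΦu : Φ t = u t + Ω := by rw [hudef]; simp
    set w : H := Complex.I • L t (Φ t) with hwdef
    have hconj : (⟪w, u t⟫ : ℂ) = starRingEnd ℂ ⟪u t, w⟫ := (inner_conj_symm _ _).symm
    have hsplit : (⟪u t, w⟫ : ℂ)
        = Complex.I * ⟪u t, L t (u t)⟫ + Complex.I * ⟪u t, L t Ω⟫ := by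
      rw [hwdef, hΦu, map_add, inner_smul_right, inner_add_right]
      ring
    have him : (⟪u t, L t (u t)⟫ : ℂ).im = 0 := by
      have h1 : starRingEnd ℂ (⟪u t, L t (u t)⟫ : ℂ) = ⟪u t, L t (u t)⟫ := by
        rw [inner_conj_symm]
        exact (hLsa t ht).isSymmetric (u t) (u t)
      exact Complex.conj_eq_iff_im.mp h1
    have habs : |(⟪u t, L t Ω⟫ : ℂ).im| ≤ ‖u t‖ * ‖L t Ω‖ := by
      calc |(⟪u t, L t Ω⟫ : ℂ).im| ≤ ‖(⟪u t, L t Ω⟫ : ℂ)‖ :=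
            Complex.abs_im_le_norm _
        _ ≤ ‖u t‖ * ‖L t Ω‖ := by
            exact norm_inner_le_norm _ _
    have hhet : he t = ‖L t Ω‖ := by
      show ‖L (π t) Ω‖ = ‖L t Ω‖
      rw [hπeq t ht]
    have hval : (Complex.reCLM (⟪u t, w⟫ + ⟪w, u t⟫) : ℝ) = 2 * (⟪u t, w⟫ : ℂ).re := by
      rw [hconj]
      simp only [Complex.reCLM_apply, Complex.add_re, Complex.conj_re]
      ring
    rw [hval]
    have hrew : (⟪u t, w⟫ : ℂ).re = -(⟪u t, L t (u t)⟫ : ℂ).im - (⟪u t, L t Ω⟫ : ℂ).im := by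
      rw [hsplit]
      simp [Complex.add_re, Complex.mul_re, Complex.I_re, Complex.I_im]
      ring
    rw [hrew, him, hqnorm t, hhet]
    have := abs_le.mp habs
    linarith [this.1, this.2]
  -- Apply the Grönwall lemma.
  have hmain := aux_sqrt_gronwall hT q he hecont hennn hq0 hqnn hqd
  intro t ht
  have h1 := hmain t ht
  rw [hqnorm t] at h1
  -- identify the integrals
  have hIcc : Set.uIcc (0 : ℝ) t = Set.Icc 0 t := Set.uIcc_of_le ht.1
  have hsub : Set.Icc (0 : ℝ) t ⊆ Set.Icc (0 : ℝ) T := Set.Icc_subset_Icc le_rfl ht.2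
  have hχint : (∫ s in (0 : ℝ)..t, χ s) = θ t := by
    show (∫ s in (0 : ℝ)..t, χ s) = ∫ s in (0 : ℝ)..t, χe s
    refine intervalIntegral.integral_congr fun s hs => ?_
    rw [hIcc] at hs
    show χ s = χ (π s)
    rw [hπeq s (hsub hs)]
  have hhint : (∫ s in (0 : ℝ)..t, ‖L s Ω‖) = ∫ s in (0 : ℝ)..t, he s := by
    refine intervalIntegral.integral_congr fun s hs => ?_
    rw [hIcc] at hs
    show ‖L s Ω‖ = ‖L (π s) Ω‖
    rw [hπeq s (hsub hs)]
  rw [hχint, hhint]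
  exact h1
end

section
/- Let H be a complex Hilbert space and T : H → H a bounded linear operator. Then the series C := ∑_{n≥0} (T T*)ⁿ / (2n)! and S := ∑_{n≥0} (T T*)ⁿ T / (2n+1)! converge in operator norm, and C ∘ C − S ∘ S* = id_H. -/
open Finset

private lemma sum_range_even_odd' {M : Type*} [AddCommMonoid M] (f : ℕ → M) (m : ℕ) :
    ∑ k ∈ Finset.range (2*m+1), f k
      = ∑ i ∈ Finset.range (m+1), f (2*i) + ∑ i ∈ Finset.range m, f (2*i+1) := by
  induction m with
  | zero => simp
  | succ m ih =>
    have h1 : 2*(m+1)+1 = (2*m+1) + 1 + 1 := by ring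
    rw [h1, Finset.sum_range_succ, Finset.sum_range_succ, ih,
      Finset.sum_range_succ (fun i => f (2*i)) (m+1),
      Finset.sum_range_succ (fun i => f (2*i+1)) m]
    have h2 : 2*(m+1) = 2*m+1+1 := by ring
    rw [h2]
    abel

private lemma choose_even_odd' (m : ℕ) (hm : m ≠ 0) :
    ∑ i ∈ Finset.range (m+1), ((2*m).choose (2*i) : ℤ)
      = ∑ i ∈ Finset.range m, ((2*m).choose (2*i+1) : ℤ) := by
  have h := Int.alternating_sum_range_choose_of_ne (n := 2*m) (by omega)
  rw [sum_range_even_odd' (fun k => ((-1:ℤ)^k * (2*m).choose k)) m] at h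
  have e1 : ∀ i, (-1:ℤ)^(2*i) * ((2*m).choose (2*i) : ℤ) = ((2*m).choose (2*i) : ℤ) := by
    intro i; rw [pow_mul]; norm_num
  have e2 : ∀ i, (-1:ℤ)^(2*i+1) * ((2*m).choose (2*i+1) : ℤ) = -((2*m).choose (2*i+1) : ℤ) := by
    intro i; rw [pow_succ, pow_mul]; norm_num
  rw [Finset.sum_congr rfl (fun i _ => e1 i), Finset.sum_congr rfl (fun i _ => e2 i),
    Finset.sum_neg_distrib] at h
  linarith

private lemma coeff_key' (m : ℕ) (hm : m ≠ 0) :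
    ∑ p ∈ Finset.HasAntidiagonal.antidiagonal m, (((2*p.1).factorial : ℝ))⁻¹ * ((2*p.2).factorial : ℝ)⁻¹
      = ∑ p ∈ Finset.HasAntidiagonal.antidiagonal (m-1),
          (((2*p.1+1).factorial : ℝ))⁻¹ * ((2*p.2+1).factorial : ℝ)⁻¹ := by
  rw [Finset.Nat.sum_antidiagonal_eq_sum_range_succ_mk,
    Finset.Nat.sum_antidiagonal_eq_sum_range_succ_mk]
  have key : ∑ i ∈ Finset.range (m+1), (((2*m).choose (2*i) : ℝ))
      = ∑ i ∈ Finset.range m, (((2*m).choose (2*i+1) : ℝ)) := by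
    exact_mod_cast congrArg (fun z : ℤ => (z : ℝ)) (choose_even_odd' m hm)
  have hL : ∀ i ∈ Finset.range (m+1),
      ((2*i).factorial : ℝ)⁻¹ * ((2*(m-i)).factorial : ℝ)⁻¹
        = ((2*m).choose (2*i) : ℝ) / ((2*m).factorial : ℝ) := by
    intro i hi
    rw [Finset.mem_range] at hi
    have h2i : 2*i ≤ 2*m := by omega
    rw [Nat.cast_choose ℝ h2i]
    have h3 : 2*m - 2*i = 2*(m-i) := by omega
    rw [h3]
    have f1 : ((2*i).factorial : ℝ) ≠ 0 := Nat.cast_ne_zero.2 (Nat.factorial_ne_zero _)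
    have f2 : ((2*(m-i)).factorial : ℝ) ≠ 0 := Nat.cast_ne_zero.2 (Nat.factorial_ne_zero _)
    have f3 : ((2*m).factorial : ℝ) ≠ 0 := Nat.cast_ne_zero.2 (Nat.factorial_ne_zero _)
    field_simp
  have hR : ∀ i ∈ Finset.range m,
      ((2*i+1).factorial : ℝ)⁻¹ * ((2*(m-1-i)+1).factorial : ℝ)⁻¹
        = ((2*m).choose (2*i+1) : ℝ) / ((2*m).factorial : ℝ) := by
    intro i hi
    rw [Finset.mem_range] at hi
    have h2i : 2*i+1 ≤ 2*m := by omega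
    rw [Nat.cast_choose ℝ h2i]
    have h3 : 2*m - (2*i+1) = 2*(m-1-i)+1 := by omega
    rw [h3]
    have f1 : ((2*i+1).factorial : ℝ) ≠ 0 := Nat.cast_ne_zero.2 (Nat.factorial_ne_zero _)
    have f2 : ((2*(m-1-i)+1).factorial : ℝ) ≠ 0 := Nat.cast_ne_zero.2 (Nat.factorial_ne_zero _)
    have f3 : ((2*m).factorial : ℝ) ≠ 0 := Nat.cast_ne_zero.2 (Nat.factorial_ne_zero _)
    field_simp
  have hm1 : (m - 1).succ = m := by omega
  rw [Finset.sum_congr rfl hL, hm1, Finset.sum_congr rfl hR,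
    ← Finset.sum_div, ← Finset.sum_div, key]

set_option maxHeartbeats 1000000 in
/-- Operator form of the hyperbolic identity `ch(k)² − sh(k) conj(sh(k)) = 1`:
for a bounded operator `T` on a complex Hilbert space, the series
`C = ∑ (T T*)ⁿ/(2n)!` and `S = ∑ (T T*)ⁿ T/(2n+1)!` converge in operator norm and
`C ∘ C − S ∘ S* = id`. -/
theorem stmt_4 {H : Type*} [NormedAddCommGroup H] [InnerProductSpace ℂ H] [CompleteSpace H]
    (T : H →L[ℂ] H) :
    ∃ C S : H →L[ℂ] H,
      HasSum (fun n : ℕ => ((Nat.factorial (2 * n) : ℝ))⁻¹ •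
        (T ∘L ContinuousLinearMap.adjoint T) ^ n) C ∧
      HasSum (fun n : ℕ => ((Nat.factorial (2 * n + 1) : ℝ))⁻¹ •
        (((T ∘L ContinuousLinearMap.adjoint T) ^ n) ∘L T)) S ∧
      C ∘L C - S ∘L ContinuousLinearMap.adjoint S = 1 := by
  set a : H →L[ℂ] H := T ∘L ContinuousLinearMap.adjoint T with ha
  have ha' : a = T * star T := by rw [ha, ContinuousLinearMap.star_eq_adjoint]; rfl
  have hstar_a : star a = a := by rw [ha']; simp [star_mul]
  have hpow : ∀ n : ℕ, ‖a ^ n‖ ≤ ‖a‖ ^ n := by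
    intro n
    induction n with
    | zero =>
      simpa [ContinuousLinearMap.one_def] using
        ContinuousLinearMap.norm_id_le (𝕜 := ℂ) (E := H)
    | succ n ih =>
      rw [pow_succ, pow_succ]
      exact le_trans (norm_mul_le _ _) (mul_le_mul_of_nonneg_right ih (norm_nonneg a))
  set f : ℕ → (H →L[ℂ] H) := fun n => ((Nat.factorial (2 * n) : ℝ))⁻¹ • a ^ n with hf
  set g : ℕ → (H →L[ℂ] H) :=
    fun n => ((Nat.factorial (2 * n + 1) : ℝ))⁻¹ • ((a ^ n) ∘L T) with hg
  have hfac : ∀ n k : ℕ, n ≤ k → ((k.factorial : ℝ))⁻¹ ≤ ((n.factorial : ℝ))⁻¹ := by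
    intro n k hnk
    apply inv_anti₀
    · exact_mod_cast Nat.factorial_pos n
    · exact_mod_cast Nat.factorial_le hnk
  have hfs : Summable fun n => ‖f n‖ := by
    apply Summable.of_nonneg_of_le (fun n => norm_nonneg _) ?_
      (Real.summable_pow_div_factorial ‖a‖)
    intro n
    rw [hf]
    simp only [norm_smul, Real.norm_eq_abs]
    rw [abs_of_nonneg (by positivity)]
    rw [div_eq_mul_inv, mul_comm (‖a‖ ^ n)]
    exact mul_le_mul (hfac _ _ (by omega)) (hpow n) (norm_nonneg _) (by positivity)
  have hgs : Summable fun n => ‖g n‖ := by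
    apply Summable.of_nonneg_of_le (fun n => norm_nonneg _) ?_
      ((Real.summable_pow_div_factorial ‖a‖).mul_right ‖T‖)
    intro n
    rw [hg]
    simp only [norm_smul, Real.norm_eq_abs]
    rw [abs_of_nonneg (by positivity)]
    have h1 : ‖(a ^ n) ∘L T‖ ≤ ‖a‖ ^ n * ‖T‖ :=
      le_trans (ContinuousLinearMap.opNorm_comp_le _ _)
        (mul_le_mul_of_nonneg_right (hpow n) (norm_nonneg _))
    calc ((2*n+1).factorial : ℝ)⁻¹ * ‖(a ^ n) ∘L T‖
        ≤ ((n.factorial : ℝ))⁻¹ * (‖a‖ ^ n * ‖T‖) :=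
          mul_le_mul (hfac _ _ (by omega)) h1 (norm_nonneg _) (by positivity)
      _ = ‖a‖ ^ n / n.factorial * ‖T‖ := by ring
  have hfsum : Summable f := hfs.of_norm
  have hgsum : Summable g := hgs.of_norm
  set C : H →L[ℂ] H := ∑' n, f n with hC
  set S : H →L[ℂ] H := ∑' n, g n with hS
  refine ⟨C, S, hfsum.hasSum, hgsum.hasSum, ?_⟩
  -- star of g
  have hstarg : ∀ n, star (g n) = ((Nat.factorial (2 * n + 1) : ℝ))⁻¹ • (star T * a ^ n) := by
    intro n
    have e : g n = ((Nat.factorial (2 * n + 1) : ℝ))⁻¹ • (a ^ n * T) := rfl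
    rw [e, star_smul, star_mul, star_pow, hstar_a, star_trivial]
  have hgs' : Summable fun n => ‖star (g n)‖ := by simpa using hgs
  -- Cauchy products
  set F : ℕ → (H →L[ℂ] H) :=
    fun m => ∑ kl ∈ Finset.HasAntidiagonal.antidiagonal m, f kl.1 * f kl.2 with hF
  set G : ℕ → (H →L[ℂ] H) :=
    fun m => ∑ kl ∈ Finset.HasAntidiagonal.antidiagonal m, g kl.1 * star (g kl.2) with hG
  have hFsummable : Summable F :=
    (summable_norm_sum_mul_antidiagonal_of_summable_norm hfs hfs).of_norm
  have hGsummable : Summable G :=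
    (summable_norm_sum_mul_antidiagonal_of_summable_norm hgs hgs').of_norm
  have hCC : HasSum F (C * C) := by
    have := tsum_mul_tsum_eq_tsum_sum_antidiagonal_of_summable_norm hfs hfs
    rw [hC, this]
    exact hFsummable.hasSum
  have hstarS : star S = ∑' n, star (g n) := by
    rw [hS]
    exact (hgsum.hasSum.star).tsum_eq.symm
  have hSS : HasSum G (S * star S) := by
    have := tsum_mul_tsum_eq_tsum_sum_antidiagonal_of_summable_norm hgs hgs'
    rw [hS, hstarS, hS] at *
    rw [hstarS, this]
    exact hGsummable.hasSum
  -- simplify F and G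
  have hFval : ∀ m, F m =
      (∑ p ∈ Finset.HasAntidiagonal.antidiagonal m,
        (((2*p.1).factorial : ℝ))⁻¹ * ((2*p.2).factorial : ℝ)⁻¹) • a ^ m := by
    intro m
    rw [hF, Finset.sum_smul]
    apply Finset.sum_congr rfl
    intro p hp
    have hpm : p.1 + p.2 = m := Finset.HasAntidiagonal.mem_antidiagonal.mp hp
    have e : ∀ k, f k = ((Nat.factorial (2 * k) : ℝ))⁻¹ • a ^ k := fun k => rfl
    rw [e, e, smul_mul_smul_comm, ← pow_add, hpm]
  have hGval : ∀ m, G m =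
      (∑ p ∈ Finset.HasAntidiagonal.antidiagonal m,
        (((2*p.1+1).factorial : ℝ))⁻¹ * ((2*p.2+1).factorial : ℝ)⁻¹) • a ^ (m+1) := by
    intro m
    rw [hG, Finset.sum_smul]
    apply Finset.sum_congr rfl
    intro p hp
    have hpm : p.1 + p.2 = m := Finset.HasAntidiagonal.mem_antidiagonal.mp hp
    rw [hstarg p.2]
    have e : g p.1 = ((Nat.factorial (2 * p.1 + 1) : ℝ))⁻¹ • (a ^ p.1 * T) := rfl
    rw [e, smul_mul_smul_comm]
    congr 1
    calc a ^ p.1 * T * (star T * a ^ p.2) = a ^ p.1 * (T * star T) * a ^ p.2 := by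
          rw [mul_assoc, mul_assoc, mul_assoc]
      _ = a ^ p.1 * a * a ^ p.2 := by rw [← ha']
      _ = a ^ (m + 1) := by rw [← pow_succ, ← pow_add]; congr 1; omega
  -- shift G
  set G' : ℕ → (H →L[ℂ] H) := fun m => match m with | 0 => 0 | (k+1) => G k with hG'
  have hG'sum : HasSum G' (S * star S) := by
    have h1 : HasSum (fun n => G' (n + 1)) (S * star S) := hSS
    have h2 := (hasSum_nat_add_iff (f := G') 1).mp h1
    rw [Finset.sum_range_one, show G' 0 = 0 from rfl, add_zero] at h2
    exact h2
  have hdiff : HasSum (fun m => F m - G' m) (C * C - S * star S) := hCC.sub hG'sum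
  have hkey : (fun m => F m - G' m) = fun m => if m = 0 then (1 : H →L[ℂ] H) else 0 := by
    funext m
    match m with
    | 0 =>
      rw [if_pos rfl]
      rw [show G' 0 = 0 from rfl, sub_zero, hFval 0]
      have e0 : ∑ p ∈ Finset.HasAntidiagonal.antidiagonal 0,
          (((2*p.1).factorial : ℝ))⁻¹ * ((2*p.2).factorial : ℝ)⁻¹ = 1 := by simp
      rw [e0, pow_zero, one_smul]
    | (k+1) =>
      rw [if_neg (Nat.succ_ne_zero k)]
      rw [show G' (k+1) = G k from rfl, hFval (k+1), hGval k]
      have := coeff_key' (k+1) (Nat.succ_ne_zero k)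
      rw [Nat.add_sub_cancel] at this
      rw [this, sub_self]
  rw [hkey] at hdiff
  have hone : HasSum (fun m => if m = 0 then (1 : H →L[ℂ] H) else 0) 1 := hasSum_ite_eq 0 1
  have : C * C - S * star S = 1 := hdiff.unique hone
  rw [← ContinuousLinearMap.star_eq_adjoint]
  exact this
end

section
/- Let k₁, k₂, k₃ be Schwartz functions on ℝ × ℝ³ × ℝ³ and let S := i∂_t − Δ_x − Δ_y. Define the space composition (a ∘ b)(t, x, y) = ∫_{ℝ³} a(t, x, z) b(t, z, y) dz and let conj denote pointwise complex conjugation. Then, pointwise on ℝ × ℝ³ × ℝ³, S( k₁ ∘ conj(k₂) ∘ k₃ ) = (S k₁) ∘ conj(k₂) ∘ k₃ − k₁ ∘ conj(S k₂) ∘ k₃ + k₁ ∘ conj(k₂) ∘ (S k₃). -/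
open MeasureTheory

noncomputable section

/-- `ℝ³` -/
abbrev R3 : Type := EuclideanSpace ℝ (Fin 3)

/-- The Laplacian on `ℝ³`-variable functions, as the sum of the second derivatives
along the coordinate directions. -/
def lap3 (g : R3 → ℂ) (x : R3) : ℂ :=
  ∑ i : Fin 3,
    fderiv ℝ (fun z => fderiv ℝ g z (EuclideanSpace.single i (1 : ℝ))) x
      (EuclideanSpace.single i (1 : ℝ))

/-- The Schrödinger operator `S = i∂_t − Δ_x − Δ_y` acting on kernels `u(t, x, y)`. -/
def Sop (u : ℝ → R3 → R3 → ℂ) (t : ℝ) (x y : R3) : ℂ :=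
  Complex.I * deriv (fun s => u s x y) t
    - lap3 (fun x' => u t x' y) x - lap3 (fun y' => u t x y') y

/-- The space composition `(a ∘ b)(t, x, y) = ∫ a(t, x, z) b(t, z, y) dz`. -/
def tComp (a b : ℝ → R3 → R3 → ℂ) : ℝ → R3 → R3 → ℂ :=
  fun t x y => ∫ z : R3, a t x z * b t z y

/-- Pointwise complex conjugation of a time-dependent kernel. -/
def tConj (a : ℝ → R3 → R3 → ℂ) : ℝ → R3 → R3 → ℂ :=
  fun t x y => starRingEnd ℂ (a t x y)

namespace Aux17

abbrev SM := SchwartzMap (ℝ × R3 × R3) ℂ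

def Dv (v : ℝ × R3 × R3) (f : SM) : SM := LineDeriv.lineDerivOp v f

lemma Dv_apply (v : ℝ × R3 × R3) (f : SM) (q : ℝ × R3 × R3) :
    Dv v f q = fderiv ℝ f q v := SchwartzMap.lineDerivOp_apply_eq_fderiv v f q

def e0 : ℝ × R3 × R3 := (1, 0, 0)
def eX (i : Fin 3) : ℝ × R3 × R3 := (0, EuclideanSpace.single i (1 : ℝ), 0)
def eY (i : Fin 3) : ℝ × R3 × R3 := (0, 0, EuclideanSpace.single i (1 : ℝ))

def SK (f : SM) : SM :=
  Complex.I • Dv e0 f - ∑ i : Fin 3, Dv (eX i) (Dv (eX i) f)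
    - ∑ i : Fin 3, Dv (eY i) (Dv (eY i) f)

abbrev LX : R3 →L[ℝ] ℝ × R3 × R3 :=
  (0 : R3 →L[ℝ] ℝ).prod ((ContinuousLinearMap.id ℝ R3).prod 0)
abbrev LY : R3 →L[ℝ] ℝ × R3 × R3 :=
  (0 : R3 →L[ℝ] ℝ).prod ((0 : R3 →L[ℝ] R3).prod (ContinuousLinearMap.id ℝ R3))

lemma hasFDerivAt_sliceX (f : SM) (t : ℝ) (y : R3) (x : R3) :
    HasFDerivAt (fun x' => f (t, x', y)) ((fderiv ℝ f (t, x, y)).comp LX) x :=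
  (f.differentiableAt.hasFDerivAt).comp x
    ((hasFDerivAt_const t x).prodMk ((hasFDerivAt_id x).prodMk (hasFDerivAt_const y x)))

lemma hasFDerivAt_sliceY (f : SM) (t : ℝ) (x : R3) (y : R3) :
    HasFDerivAt (fun y' => f (t, x, y')) ((fderiv ℝ f (t, x, y)).comp LY) y :=
  (f.differentiableAt.hasFDerivAt).comp y
    ((hasFDerivAt_const t y).prodMk ((hasFDerivAt_const x y).prodMk (hasFDerivAt_id y)))

lemma fderiv_sliceX (f : SM) (t : ℝ) (y : R3) (x : R3) (v : R3) :
    fderiv ℝ (fun x' => f (t, x', y)) x v = fderiv ℝ f (t, x, y) (0, v, 0) := by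
  rw [(hasFDerivAt_sliceX f t y x).fderiv]; rfl

lemma fderiv_sliceY (f : SM) (t : ℝ) (x : R3) (y : R3) (v : R3) :
    fderiv ℝ (fun y' => f (t, x, y')) y v = fderiv ℝ f (t, x, y) (0, 0, v) := by
  rw [(hasFDerivAt_sliceY f t x y).fderiv]; rfl

lemma hasDerivAt_sliceT (f : SM) (x y : R3) (t : ℝ) :
    HasDerivAt (fun s => f (s, x, y)) (fderiv ℝ f (t, x, y) e0) t :=
  (f.differentiableAt.hasFDerivAt).comp_hasDerivAt t
    ((hasDerivAt_id t).prodMk ((hasDerivAt_const t x).prodMk (hasDerivAt_const t y)))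

lemma SM_sum_apply {ι : Type*} (s : Finset ι) (f : ι → SM) (q : ℝ × R3 × R3) :
    (∑ i ∈ s, f i) q = ∑ i ∈ s, f i q := by
  classical
  induction s using Finset.cons_induction with
  | empty => simp [SchwartzMap.zero_apply]
  | cons i s hi ih => rw [Finset.sum_cons, Finset.sum_cons, SchwartzMap.add_apply, ih]

lemma lap3_sliceX (f : SM) (t : ℝ) (y : R3) (x : R3) :
    lap3 (fun x' => f (t, x', y)) x = ∑ i : Fin 3, Dv (eX i) (Dv (eX i) f) (t, x, y) := by
  unfold lap3
  refine Finset.sum_congr rfl fun i _ => ?_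
  have h1 : (fun z => fderiv ℝ (fun x' => f (t, x', y)) z (EuclideanSpace.single i (1 : ℝ)))
      = fun z => (Dv (eX i) f) (t, z, y) := by
    funext z; rw [fderiv_sliceX, Dv_apply]; rfl
  rw [h1, fderiv_sliceX, Dv_apply]; rfl

lemma lap3_sliceY (f : SM) (t : ℝ) (x : R3) (y : R3) :
    lap3 (fun y' => f (t, x, y')) y = ∑ i : Fin 3, Dv (eY i) (Dv (eY i) f) (t, x, y) := by
  unfold lap3
  refine Finset.sum_congr rfl fun i _ => ?_
  have h1 : (fun z => fderiv ℝ (fun y' => f (t, x, y')) z (EuclideanSpace.single i (1 : ℝ)))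
      = fun z => (Dv (eY i) f) (t, x, z) := by
    funext z; rw [fderiv_sliceY, Dv_apply]; rfl
  rw [h1, fderiv_sliceY, Dv_apply]; rfl

lemma Sop_slice (f : SM) (t : ℝ) (x y : R3) :
    Sop (fun s a b => f (s, a, b)) t x y = SK f (t, x, y) := by
  show Complex.I * deriv (fun s => f (s, x, y)) t - lap3 (fun x' => f (t, x', y)) x
      - lap3 (fun y' => f (t, x, y')) y = _
  rw [(hasDerivAt_sliceT f x y t).deriv, lap3_sliceX, lap3_sliceY]
  simp only [SK, SchwartzMap.sub_apply, SchwartzMap.smul_apply, SM_sum_apply, Dv_apply,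
    smul_eq_mul]

lemma decay_aux {V : Type*} [NormedAddCommGroup V] [NormedSpace ℝ V]
    (f : SchwartzMap (ℝ × R3 × R3) V) :
    ∃ C : ℝ, 0 ≤ C ∧ ∀ (s : ℝ) (a b : R3),
      ‖f (s, a, b)‖ ≤ C ∧ (1 + ‖a‖) ^ 4 * ‖f (s, a, b)‖ ≤ C
        ∧ (1 + ‖b‖) ^ 4 * ‖f (s, a, b)‖ ≤ C := by
  refine ⟨2 ^ 4 * (Finset.Iic ((4 : ℕ), (0 : ℕ))).sup
      (fun m => SchwartzMap.seminorm ℝ m.1 m.2) f,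
    by positivity, fun s a b => ?_⟩
  have key : ∀ q : ℝ × R3 × R3, (1 + ‖q‖) ^ 4 * ‖f q‖
      ≤ 2 ^ 4 * (Finset.Iic ((4 : ℕ), (0 : ℕ))).sup
          (fun m => SchwartzMap.seminorm ℝ m.1 m.2) f := fun q => by
    simpa [norm_iteratedFDeriv_zero] using
      SchwartzMap.one_add_le_sup_seminorm_apply (𝕜 := ℝ) (m := ((4 : ℕ), (0 : ℕ)))
        le_rfl le_rfl f q
  have hq := key (s, a, b)
  have hqn : (0 : ℝ) ≤ ‖(s, a, b)‖ := norm_nonneg _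
  have hfn : (0 : ℝ) ≤ ‖f (s, a, b)‖ := norm_nonneg _
  have h1q : (1 : ℝ) ≤ (1 + ‖(s, a, b)‖) ^ 4 := one_le_pow₀ (by linarith)
  have ha : ‖a‖ ≤ ‖(s, a, b)‖ :=
    le_trans (norm_fst_le ((a, b) : R3 × R3)) (norm_snd_le ((s, (a, b)) : ℝ × (R3 × R3)))
  have hb : ‖b‖ ≤ ‖(s, a, b)‖ :=
    le_trans (norm_snd_le ((a, b) : R3 × R3)) (norm_snd_le ((s, (a, b)) : ℝ × (R3 × R3)))
  refine ⟨?_, ?_, ?_⟩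
  · nlinarith
  · refine le_trans ?_ hq
    have := pow_le_pow_left₀ (by positivity) (by linarith : 1 + ‖a‖ ≤ 1 + ‖(s, a, b)‖) 4
    nlinarith
  · refine le_trans ?_ hq
    have := pow_le_pow_left₀ (by positivity) (by linarith : 1 + ‖b‖ ≤ 1 + ‖(s, a, b)‖) 4
    nlinarith

lemma int_inv4 : Integrable (fun z : R3 => ((1 + ‖z‖) ^ 4)⁻¹) := by
  have h : ((Module.finrank ℝ R3 : ℝ)) < (4 : ℝ) := by
    simp [finrank_euclideanSpace]; norm_num
  refine (integrable_one_add_norm (E := R3) (μ := volume) h).congr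
    (Filter.Eventually.of_forall fun z => ?_)
  show (1 + ‖z‖) ^ (-(4:ℝ)) = ((1 + ‖z‖) ^ (4:ℕ))⁻¹
  rw [← Real.rpow_natCast (1 + ‖z‖) 4, ← Real.rpow_neg (by positivity)]
  norm_num

lemma int_dom2 : Integrable (fun p : R3 × R3 => ((1 + ‖p.1‖) ^ 4)⁻¹ * ((1 + ‖p.2‖) ^ 4)⁻¹) := by
  rw [MeasureTheory.Measure.volume_eq_prod]
  exact int_inv4.mul_prod int_inv4

def g3 (a b c : SM) (t : ℝ) (x y : R3) (p : R3 × R3) : ℂ :=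
  a (t, x, p.2) * (starRingEnd ℂ) (b (t, p.2, p.1)) * c (t, p.1, y)

lemma cont_g3 (a b c : SM) (t : ℝ) (x y : R3) : Continuous (g3 a b c t x y) := by
  unfold g3
  simp only [starRingEnd_apply]
  fun_prop

lemma norm_g3 (a b c : SM) (t : ℝ) (x y : R3) (p : R3 × R3) :
    ‖g3 a b c t x y p‖ = ‖a (t, x, p.2)‖ * ‖b (t, p.2, p.1)‖ * ‖c (t, p.1, y)‖ := by
  simp [g3, norm_mul]

lemma div_bound {u C P : ℝ} (hP : 0 < P) (h : P * u ≤ C) : u ≤ C * P⁻¹ := by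
  have h2 := mul_le_mul_of_nonneg_right h (inv_nonneg.mpr hP.le)
  calc u = P * u * P⁻¹ := by field_simp
  _ ≤ C * P⁻¹ := h2

lemma g3_bound (a b c : SM) :
    ∃ M : ℝ, 0 ≤ M ∧ ∀ (t : ℝ) (x y : R3) (p : R3 × R3),
      ‖g3 a b c t x y p‖ ≤ M * (((1 + ‖p.1‖) ^ 4)⁻¹ * ((1 + ‖p.2‖) ^ 4)⁻¹) := by
  obtain ⟨Ca, hCa0, hCa⟩ := decay_aux a
  obtain ⟨Cb, hCb0, hCb⟩ := decay_aux b
  obtain ⟨Cc, hCc0, hCc⟩ := decay_aux c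
  refine ⟨Ca * Cb * Cc, by positivity, fun t x y p => ?_⟩
  have h1 : ‖a (t, x, p.2)‖ ≤ Ca * ((1 + ‖p.2‖) ^ 4)⁻¹ :=
    div_bound (by positivity) (hCa t x p.2).2.2
  have h2 : ‖b (t, p.2, p.1)‖ ≤ Cb * ((1 + ‖p.1‖) ^ 4)⁻¹ :=
    div_bound (by positivity) (hCb t p.2 p.1).2.2
  have h3 : ‖c (t, p.1, y)‖ ≤ Cc := (hCc t p.1 y).1
  rw [norm_g3]
  calc ‖a (t, x, p.2)‖ * ‖b (t, p.2, p.1)‖ * ‖c (t, p.1, y)‖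
      ≤ (Ca * ((1 + ‖p.2‖) ^ 4)⁻¹) * (Cb * ((1 + ‖p.1‖) ^ 4)⁻¹) * Cc := by
        gcongr
  _ = Ca * Cb * Cc * (((1 + ‖p.1‖) ^ 4)⁻¹ * ((1 + ‖p.2‖) ^ 4)⁻¹) := by ring

lemma integrable_g3 (a b c : SM) (t : ℝ) (x y : R3) : Integrable (g3 a b c t x y) := by
  obtain ⟨M, hM0, hM⟩ := g3_bound a b c
  exact Integrable.mono' (int_dom2.const_mul M) (cont_g3 a b c t x y).aestronglyMeasurable
    (Filter.Eventually.of_forall fun p => by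
      simpa [mul_assoc] using hM t x y p)



def CJ : ℂ →L[ℝ] ℂ := Complex.conjCLE.toContinuousLinearMap

lemma CJ_apply (z : ℂ) : CJ z = starRingEnd ℂ z := rfl

lemma hasDerivAt_conj {h : ℝ → ℂ} {h' : ℂ} {s : ℝ} (H : HasDerivAt h h' s) :
    HasDerivAt (fun u => starRingEnd ℂ (h u)) (starRingEnd ℂ h') s := by
  have := CJ.hasFDerivAt.comp_hasDerivAt s H
  exact this

lemma hasFDerivAt_conj {h : R3 → ℂ} {Dh : R3 →L[ℝ] ℂ} {w : R3} (H : HasFDerivAt h Dh w) :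
    HasFDerivAt (fun w' => starRingEnd ℂ (h w')) (CJ.comp Dh) w := by
  have := CJ.hasFDerivAt.comp w H
  exact this

lemma integrable_pairW (F G : SM) (t : ℝ) (x z : R3) (K : ℂ) :
    Integrable (fun w : R3 => starRingEnd ℂ (G (t, w, z)) * K * F (t, x, w)) := by
  obtain ⟨CF, hCF0, hCF⟩ := decay_aux F
  obtain ⟨CG, hCG0, hCG⟩ := decay_aux G
  have hc : Continuous (fun w : R3 => starRingEnd ℂ (G (t, w, z)) * K * F (t, x, w)) := by
    simp only [starRingEnd_apply]; fun_prop
  refine Integrable.mono' (int_inv4.const_mul (CG * ‖K‖ * CF)) hc.aestronglyMeasurable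
    (Filter.Eventually.of_forall fun w => ?_)
  · have h1 : ‖F (t, x, w)‖ ≤ CF * ((1 + ‖w‖) ^ 4)⁻¹ :=
      div_bound (by positivity) (hCF t x w).2.2
    have h2 : ‖G (t, w, z)‖ ≤ CG := (hCG t w z).1
    calc ‖starRingEnd ℂ (G (t, w, z)) * K * F (t, x, w)‖
        = ‖G (t, w, z)‖ * ‖K‖ * ‖F (t, x, w)‖ := by simp [norm_mul]
    _ ≤ CG * ‖K‖ * (CF * ((1 + ‖w‖) ^ 4)⁻¹) := by gcongr
    _ = CG * ‖K‖ * CF * ((1 + ‖w‖) ^ 4)⁻¹ := by ring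

lemma integrable_pairZ (F G : SM) (t : ℝ) (w y : R3) (K : ℂ) :
    Integrable (fun z : R3 => K * starRingEnd ℂ (G (t, w, z)) * F (t, z, y)) := by
  obtain ⟨CF, hCF0, hCF⟩ := decay_aux F
  obtain ⟨CG, hCG0, hCG⟩ := decay_aux G
  have hc : Continuous (fun z : R3 => K * starRingEnd ℂ (G (t, w, z)) * F (t, z, y)) := by
    simp only [starRingEnd_apply]; fun_prop
  refine Integrable.mono' (int_inv4.const_mul (‖K‖ * CG * CF)) hc.aestronglyMeasurable
    (Filter.Eventually.of_forall fun z => ?_)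
  · have h1 : ‖F (t, z, y)‖ ≤ CF * ((1 + ‖z‖) ^ 4)⁻¹ :=
      div_bound (by positivity) (hCF t z y).2.1
    have h2 : ‖G (t, w, z)‖ ≤ CG := (hCG t w z).1
    calc ‖K * starRingEnd ℂ (G (t, w, z)) * F (t, z, y)‖
        = ‖K‖ * ‖G (t, w, z)‖ * ‖F (t, z, y)‖ := by simp [norm_mul]
    _ ≤ ‖K‖ * CG * (CF * ((1 + ‖z‖) ^ 4)⁻¹) := by gcongr
    _ = ‖K‖ * CG * CF * ((1 + ‖z‖) ^ 4)⁻¹ := by ring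

lemma fderiv_sliceY' (f : SM) (i : Fin 3) (t : ℝ) (x w : R3) :
    fderiv ℝ (fun w' => f (t, x, w')) w (EuclideanSpace.single i (1 : ℝ))
      = (Dv (eY i) f) (t, x, w) := by
  rw [fderiv_sliceY, Dv_apply]; rfl

lemma fderiv_sliceX' (f : SM) (i : Fin 3) (t : ℝ) (z w : R3) :
    fderiv ℝ (fun w' => f (t, w', z)) w (EuclideanSpace.single i (1 : ℝ))
      = (Dv (eX i) f) (t, w, z) := by
  rw [fderiv_sliceX, Dv_apply]; rfl

lemma fderiv_conj_sliceX (f : SM) (i : Fin 3) (K : ℂ) (t : ℝ) (z w : R3) :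
    fderiv ℝ (fun w' => starRingEnd ℂ (f (t, w', z)) * K) w (EuclideanSpace.single i (1 : ℝ))
      = starRingEnd ℂ ((Dv (eX i) f) (t, w, z)) * K := by
  rw [((hasFDerivAt_conj (hasFDerivAt_sliceX f t z w)).mul_const K).fderiv]
  simp [CJ_apply, Dv_apply, smul_eq_mul, eX, mul_comm]

lemma fderiv_const_mul_conj_sliceY (f : SM) (i : Fin 3) (K : ℂ) (t : ℝ) (w z : R3) :
    fderiv ℝ (fun z' => K * starRingEnd ℂ (f (t, w, z'))) z (EuclideanSpace.single i (1 : ℝ))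
      = K * starRingEnd ℂ ((Dv (eY i) f) (t, w, z)) := by
  rw [((hasFDerivAt_conj (hasFDerivAt_sliceY f t w z)).const_mul K).fderiv]
  simp [CJ_apply, Dv_apply, smul_eq_mul, eY]

lemma diff_sliceY (f : SM) (t : ℝ) (x : R3) :
    Differentiable ℝ (fun w : R3 => f (t, x, w)) :=
  fun w => (hasFDerivAt_sliceY f t x w).differentiableAt

lemma diff_sliceX (f : SM) (t : ℝ) (y : R3) :
    Differentiable ℝ (fun z : R3 => f (t, z, y)) :=
  fun z => (hasFDerivAt_sliceX f t y z).differentiableAt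

lemma diff_conj_sliceX_mul (f : SM) (K : ℂ) (t : ℝ) (z : R3) :
    Differentiable ℝ (fun w : R3 => starRingEnd ℂ (f (t, w, z)) * K) :=
  fun w => ((hasFDerivAt_conj (hasFDerivAt_sliceX f t z w)).mul_const K).differentiableAt

lemma diff_const_mul_conj_sliceY (f : SM) (K : ℂ) (t : ℝ) (w : R3) :
    Differentiable ℝ (fun z : R3 => K * starRingEnd ℂ (f (t, w, z))) :=
  fun z => ((hasFDerivAt_conj (hasFDerivAt_sliceY f t w z)).const_mul K).differentiableAt

lemma ibpW (a b : SM) (i : Fin 3) (t : ℝ) (x z : R3) (K : ℂ) :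
    ∫ w : R3, (Dv (eY i) (Dv (eY i) a)) (t, x, w) * (starRingEnd ℂ (b (t, w, z)) * K)
      = ∫ w : R3, a (t, x, w) * (starRingEnd ℂ ((Dv (eX i) (Dv (eX i) b)) (t, w, z)) * K) := by
  have h1 : Integrable (fun w : R3 =>
      fderiv ℝ (fun w' => starRingEnd ℂ (b (t, w', z)) * K) w (EuclideanSpace.single i (1 : ℝ))
        * (Dv (eY i) a) (t, x, w)) :=
    (integrable_pairW (Dv (eY i) a) (Dv (eX i) b) t x z K).congr
      (Filter.Eventually.of_forall fun w => by simp only [fderiv_conj_sliceX])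
  have h2 : Integrable (fun w : R3 => starRingEnd ℂ (b (t, w, z)) * K
      * fderiv ℝ (fun w' => (Dv (eY i) a) (t, x, w')) w (EuclideanSpace.single i (1 : ℝ))) :=
    (integrable_pairW (Dv (eY i) (Dv (eY i) a)) b t x z K).congr
      (Filter.Eventually.of_forall fun w => by simp only [fderiv_sliceY']; try ring)
  have h3 : Integrable (fun w : R3 => starRingEnd ℂ (b (t, w, z)) * K * (Dv (eY i) a) (t, x, w)) :=
    integrable_pairW (Dv (eY i) a) b t x z K
  have step1 := integral_mul_fderiv_eq_neg_fderiv_mul_of_integrable h1 h2 h3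
    (fun w _ => diff_conj_sliceX_mul b K t z w) (fun w _ => diff_sliceY (Dv (eY i) a) t x w)
  have h4 : Integrable (fun w : R3 =>
      fderiv ℝ (fun w' => starRingEnd ℂ ((Dv (eX i) b) (t, w', z)) * K) w
        (EuclideanSpace.single i (1 : ℝ)) * a (t, x, w)) :=
    (integrable_pairW a (Dv (eX i) (Dv (eX i) b)) t x z K).congr
      (Filter.Eventually.of_forall fun w => by simp only [fderiv_conj_sliceX])
  have h5 : Integrable (fun w : R3 => starRingEnd ℂ ((Dv (eX i) b) (t, w, z)) * K
      * fderiv ℝ (fun w' => a (t, x, w')) w (EuclideanSpace.single i (1 : ℝ))) :=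
    (integrable_pairW (Dv (eY i) a) (Dv (eX i) b) t x z K).congr
      (Filter.Eventually.of_forall fun w => by simp only [fderiv_sliceY'])
  have h6 : Integrable (fun w : R3 => starRingEnd ℂ ((Dv (eX i) b) (t, w, z)) * K * a (t, x, w)) :=
    integrable_pairW a (Dv (eX i) b) t x z K
  have step2 := integral_mul_fderiv_eq_neg_fderiv_mul_of_integrable h4 h5 h6
    (fun w _ => diff_conj_sliceX_mul (Dv (eX i) b) K t z w) (fun w _ => diff_sliceY a t x w)
  simp only [fderiv_sliceY', fderiv_conj_sliceX] at step1 step2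
  have gl : ∫ w : R3, (Dv (eY i) (Dv (eY i) a)) (t, x, w) * (starRingEnd ℂ (b (t, w, z)) * K)
      = ∫ w : R3, starRingEnd ℂ (b (t, w, z)) * K * (Dv (eY i) (Dv (eY i) a)) (t, x, w) :=
    integral_congr_ae (Filter.Eventually.of_forall fun w => by ring)
  have gr : ∫ w : R3, a (t, x, w) * (starRingEnd ℂ ((Dv (eX i) (Dv (eX i) b)) (t, w, z)) * K)
      = ∫ w : R3, starRingEnd ℂ ((Dv (eX i) (Dv (eX i) b)) (t, w, z)) * K * a (t, x, w) :=
    integral_congr_ae (Filter.Eventually.of_forall fun w => by ring)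
  rw [gl, gr, step1, step2, neg_neg]

lemma ibpZ (b c : SM) (i : Fin 3) (t : ℝ) (w y : R3) (K : ℂ) :
    ∫ z : R3, K * starRingEnd ℂ ((Dv (eY i) (Dv (eY i) b)) (t, w, z)) * c (t, z, y)
      = ∫ z : R3, K * starRingEnd ℂ (b (t, w, z)) * (Dv (eX i) (Dv (eX i) c)) (t, z, y) := by
  have h1 : Integrable (fun z : R3 =>
      fderiv ℝ (fun z' => c (t, z', y)) z (EuclideanSpace.single i (1 : ℝ))
        * (K * starRingEnd ℂ ((Dv (eY i) b) (t, w, z)))) :=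
    (integrable_pairZ (Dv (eX i) c) (Dv (eY i) b) t w y K).congr
      (Filter.Eventually.of_forall fun z => by simp only [fderiv_sliceX']; try ring)
  have h2 : Integrable (fun z : R3 => c (t, z, y)
      * fderiv ℝ (fun z' => K * starRingEnd ℂ ((Dv (eY i) b) (t, w, z'))) z
        (EuclideanSpace.single i (1 : ℝ))) :=
    (integrable_pairZ c (Dv (eY i) (Dv (eY i) b)) t w y K).congr
      (Filter.Eventually.of_forall fun z => by simp only [fderiv_const_mul_conj_sliceY]; try ring)
  have h3 : Integrable (fun z : R3 => c (t, z, y) * (K * starRingEnd ℂ ((Dv (eY i) b) (t, w, z)))) :=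
    (integrable_pairZ c (Dv (eY i) b) t w y K).congr
      (Filter.Eventually.of_forall fun z => by simp only []; try ring)
  have step1 := integral_mul_fderiv_eq_neg_fderiv_mul_of_integrable h1 h2 h3
    (fun z _ => diff_sliceX c t y z) (fun z _ => diff_const_mul_conj_sliceY (Dv (eY i) b) K t w z)
  have h4 : Integrable (fun z : R3 =>
      fderiv ℝ (fun z' => (Dv (eX i) c) (t, z', y)) z (EuclideanSpace.single i (1 : ℝ))
        * (K * starRingEnd ℂ (b (t, w, z)))) :=
    (integrable_pairZ (Dv (eX i) (Dv (eX i) c)) b t w y K).congr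
      (Filter.Eventually.of_forall fun z => by simp only [fderiv_sliceX']; try ring)
  have h5 : Integrable (fun z : R3 => (Dv (eX i) c) (t, z, y)
      * fderiv ℝ (fun z' => K * starRingEnd ℂ (b (t, w, z'))) z
        (EuclideanSpace.single i (1 : ℝ))) :=
    (integrable_pairZ (Dv (eX i) c) (Dv (eY i) b) t w y K).congr
      (Filter.Eventually.of_forall fun z => by simp only [fderiv_const_mul_conj_sliceY]; try ring)
  have h6 : Integrable (fun z : R3 => (Dv (eX i) c) (t, z, y) * (K * starRingEnd ℂ (b (t, w, z)))) :=
    (integrable_pairZ (Dv (eX i) c) b t w y K).congr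
      (Filter.Eventually.of_forall fun z => by simp only []; try ring)
  have step2 := integral_mul_fderiv_eq_neg_fderiv_mul_of_integrable h4 h5 h6
    (fun z _ => diff_sliceX (Dv (eX i) c) t y z) (fun z _ => diff_const_mul_conj_sliceY b K t w z)
  simp only [fderiv_sliceX', fderiv_const_mul_conj_sliceY] at step1 step2
  have gl : ∫ z : R3, K * starRingEnd ℂ ((Dv (eY i) (Dv (eY i) b)) (t, w, z)) * c (t, z, y)
      = ∫ z : R3, c (t, z, y) * (K * starRingEnd ℂ ((Dv (eY i) (Dv (eY i) b)) (t, w, z))) :=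
    integral_congr_ae (Filter.Eventually.of_forall fun z => by simp only []; try ring)
  have gr : ∫ z : R3, K * starRingEnd ℂ (b (t, w, z)) * (Dv (eX i) (Dv (eX i) c)) (t, z, y)
      = ∫ z : R3, (Dv (eX i) (Dv (eX i) c)) (t, z, y) * (K * starRingEnd ℂ (b (t, w, z))) :=
    integral_congr_ae (Filter.Eventually.of_forall fun z => by simp only []; try ring)
  rw [gl, gr]
  rw [step2] at step1
  rw [neg_neg] at step1
  exact step1


lemma tComp_eq (a b c : SM) :
    tComp (tComp (fun s p q => a (s, p, q)) (tConj fun s p q => b (s, p, q)))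
      (fun s p q => c (s, p, q))
    = fun t x y => ∫ p : R3 × R3, g3 a b c t x y p := by
  funext t x y
  show ∫ z : R3, (∫ w : R3, a (t, x, w) * starRingEnd ℂ (b (t, w, z))) * c (t, z, y)
      = ∫ p : R3 × R3, g3 a b c t x y p
  have h1 : ∀ z : R3, (∫ w : R3, a (t, x, w) * starRingEnd ℂ (b (t, w, z))) * c (t, z, y)
      = ∫ w : R3, g3 a b c t x y (z, w) :=
    fun z => (integral_mul_const _ _).symm
  rw [show (volume : Measure (R3 × R3)) = (volume : Measure R3).prod volume from
    MeasureTheory.Measure.volume_eq_prod R3 R3]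
  simp_rw [h1]
  exact integral_integral
    ((MeasureTheory.Measure.volume_eq_prod R3 R3) ▸ integrable_g3 a b c t x y)

lemma hasDerivAt_J (a b c : SM) (x y : R3) (t : ℝ) :
    HasDerivAt (fun s => ∫ p : R3 × R3, g3 a b c s x y p)
      (∫ p : R3 × R3, (g3 (Dv e0 a) b c t x y p + g3 a (Dv e0 b) c t x y p
        + g3 a b (Dv e0 c) t x y p)) t := by
  obtain ⟨M₁, hM₁0, hM₁⟩ := g3_bound (Dv e0 a) b c
  obtain ⟨M₂, hM₂0, hM₂⟩ := g3_bound a (Dv e0 b) c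
  obtain ⟨M₃, hM₃0, hM₃⟩ := g3_bound a b (Dv e0 c)
  refine (hasDerivAt_integral_of_dominated_loc_of_deriv_le (s := Metric.ball t 1)
    (F := fun s p => g3 a b c s x y p)
    (F' := fun s p => g3 (Dv e0 a) b c s x y p + g3 a (Dv e0 b) c s x y p
      + g3 a b (Dv e0 c) s x y p)
    (bound := fun p => (M₁ + M₂ + M₃) * (((1 + ‖p.1‖) ^ 4)⁻¹ * ((1 + ‖p.2‖) ^ 4)⁻¹))
    (Metric.ball_mem_nhds t one_pos) ?_ ?_ ?_ ?_ ?_ ?_).2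
  · exact Filter.Eventually.of_forall fun s => (cont_g3 a b c s x y).aestronglyMeasurable
  · exact integrable_g3 a b c t x y
  · exact (((cont_g3 (Dv e0 a) b c t x y).add (cont_g3 a (Dv e0 b) c t x y)).add
      (cont_g3 a b (Dv e0 c) t x y)).aestronglyMeasurable
  · refine Filter.Eventually.of_forall fun p => fun s _ => ?_
    calc ‖g3 (Dv e0 a) b c s x y p + g3 a (Dv e0 b) c s x y p + g3 a b (Dv e0 c) s x y p‖
        ≤ ‖g3 (Dv e0 a) b c s x y p + g3 a (Dv e0 b) c s x y p‖
            + ‖g3 a b (Dv e0 c) s x y p‖ := norm_add_le _ _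
    _ ≤ ‖g3 (Dv e0 a) b c s x y p‖ + ‖g3 a (Dv e0 b) c s x y p‖
            + ‖g3 a b (Dv e0 c) s x y p‖ := by
          have := norm_add_le (g3 (Dv e0 a) b c s x y p) (g3 a (Dv e0 b) c s x y p)
          linarith
    _ ≤ M₁ * (((1 + ‖p.1‖) ^ 4)⁻¹ * ((1 + ‖p.2‖) ^ 4)⁻¹)
          + M₂ * (((1 + ‖p.1‖) ^ 4)⁻¹ * ((1 + ‖p.2‖) ^ 4)⁻¹)
          + M₃ * (((1 + ‖p.1‖) ^ 4)⁻¹ * ((1 + ‖p.2‖) ^ 4)⁻¹) := by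
          have g1 := hM₁ s x y p; have g2 := hM₂ s x y p; have g3' := hM₃ s x y p
          linarith
    _ = (M₁ + M₂ + M₃) * (((1 + ‖p.1‖) ^ 4)⁻¹ * ((1 + ‖p.2‖) ^ 4)⁻¹) := by ring
  · exact int_dom2.const_mul _
  · refine Filter.Eventually.of_forall fun p => fun s _ => ?_
    have h1 : HasDerivAt (fun s' => a (s', x, p.2)) (fderiv ℝ a (s, x, p.2) e0) s :=
      hasDerivAt_sliceT a x p.2 s
    have h2 : HasDerivAt (fun s' => starRingEnd ℂ (b (s', p.2, p.1)))
        (starRingEnd ℂ (fderiv ℝ b (s, p.2, p.1) e0)) s :=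
      hasDerivAt_conj (hasDerivAt_sliceT b p.2 p.1 s)
    have h3 : HasDerivAt (fun s' => c (s', p.1, y)) (fderiv ℝ c (s, p.1, y) e0) s :=
      hasDerivAt_sliceT c p.1 y s
    have := (h1.mul h2).mul h3
    convert this using 1
    · rfl
    · rfl
    simp only [g3, Dv_apply, Pi.mul_apply]
    ring

lemma smul_clm_norm_le (S : ℂ) (T : R3 →L[ℝ] ℂ) : ‖S • T‖ ≤ ‖S‖ * ‖T‖ := by
  refine ContinuousLinearMap.opNorm_le_bound _ (by positivity) fun v => ?_
  rw [ContinuousLinearMap.smul_apply, smul_eq_mul, norm_mul]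
  calc ‖S‖ * ‖T v‖ ≤ ‖S‖ * (‖T‖ * ‖v‖) := by gcongr; exact T.le_opNorm v
  _ = ‖S‖ * ‖T‖ * ‖v‖ := by ring

lemma integrable_fJx (a b c : SM) (t : ℝ) (y : R3) (x : R3) :
    Integrable (fun p : R3 × R3 => (c (t, p.1, y) * starRingEnd ℂ (b (t, p.2, p.1)))
      • ((fderiv ℝ (a : (ℝ × R3 × R3) → ℂ) (t, x, p.2)).comp LX)) := by
  obtain ⟨CA, hCA0, hCA⟩ := decay_aux (SchwartzMap.fderivCLM ℝ (ℝ × R3 × R3) ℂ a)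
  obtain ⟨CB, hCB0, hCB⟩ := decay_aux b
  obtain ⟨CC, hCC0, hCC⟩ := decay_aux c
  have hLX : ‖(LX : R3 →L[ℝ] ℝ × R3 × R3)‖ ≤ 1 := by
    refine ContinuousLinearMap.opNorm_le_bound _ zero_le_one fun v => ?_
    have : ‖(LX : R3 →L[ℝ] ℝ × R3 × R3) v‖ = ‖v‖ := by
      simp [Prod.norm_def]
    rw [this, one_mul]
  have hcont : Continuous (fun p : R3 × R3 => (c (t, p.1, y) * starRingEnd ℂ (b (t, p.2, p.1)))
      • ((fderiv ℝ (a : (ℝ × R3 × R3) → ℂ) (t, x, p.2)).comp LX)) := by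
    have hc1 : Continuous fun p : R3 × R3 => c (t, p.1, y) * starRingEnd ℂ (b (t, p.2, p.1)) := by
      simp only [starRingEnd_apply]; fun_prop
    have hc2 : Continuous fun p : R3 × R3 =>
        (fderiv ℝ (a : (ℝ × R3 × R3) → ℂ) (t, x, p.2)).comp LX := by
      have hc3 : Continuous fun p : R3 × R3 => fderiv ℝ (a : (ℝ × R3 × R3) → ℂ) (t, x, p.2) := by
        have : (fun p : R3 × R3 => fderiv ℝ (a : (ℝ × R3 × R3) → ℂ) (t, x, p.2))
            = fun p : R3 × R3 => (SchwartzMap.fderivCLM ℝ (ℝ × R3 × R3) ℂ a) (t, x, p.2) := by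
          funext p; rw [SchwartzMap.fderivCLM_apply]
        rw [this]
        exact (SchwartzMap.fderivCLM ℝ (ℝ × R3 × R3) ℂ a).continuous.comp (by fun_prop)
      exact (((ContinuousLinearMap.compL ℝ R3 (ℝ × R3 × R3) ℂ).flip LX).continuous).comp hc3
    exact hc1.smul hc2
  refine Integrable.mono' (int_dom2.const_mul (CC * CB * CA)) hcont.aestronglyMeasurable
    (Filter.Eventually.of_forall fun p => ?_)
  have h1 : ‖c (t, p.1, y)‖ ≤ CC * ((1 + ‖p.1‖) ^ 4)⁻¹ :=
    div_bound (by positivity) (hCC t p.1 y).2.1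
  have h2 : ‖b (t, p.2, p.1)‖ ≤ CB := (hCB t p.2 p.1).1
  have h3 : ‖fderiv ℝ (a : (ℝ × R3 × R3) → ℂ) (t, x, p.2)‖ ≤ CA * ((1 + ‖p.2‖) ^ 4)⁻¹ := by
    have := div_bound (P := (1 + ‖p.2‖) ^ 4) (by positivity) (hCA t x p.2).2.2
    rwa [SchwartzMap.fderivCLM_apply] at this
  calc ‖(c (t, p.1, y) * starRingEnd ℂ (b (t, p.2, p.1)))
      • ((fderiv ℝ (a : (ℝ × R3 × R3) → ℂ) (t, x, p.2)).comp LX)‖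
      ≤ ‖c (t, p.1, y)‖ * ‖b (t, p.2, p.1)‖
        * ‖(fderiv ℝ (a : (ℝ × R3 × R3) → ℂ) (t, x, p.2)).comp LX‖ := by
        refine le_trans (smul_clm_norm_le _ _) (le_of_eq ?_)
        rw [norm_mul, RCLike.norm_conj]
  _ ≤ ‖c (t, p.1, y)‖ * ‖b (t, p.2, p.1)‖
        * (‖fderiv ℝ (a : (ℝ × R3 × R3) → ℂ) (t, x, p.2)‖ * ‖(LX : R3 →L[ℝ] ℝ × R3 × R3)‖) := by
        gcongr
        exact ContinuousLinearMap.opNorm_comp_le _ _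
  _ ≤ (CC * ((1 + ‖p.1‖) ^ 4)⁻¹) * CB * ((CA * ((1 + ‖p.2‖) ^ 4)⁻¹) * 1) := by
        gcongr
  _ = CC * CB * CA * (((1 + ‖p.1‖) ^ 4)⁻¹ * ((1 + ‖p.2‖) ^ 4)⁻¹) := by ring

lemma fderiv_J_x (a b c : SM) (t : ℝ) (y : R3) (x : R3) (i : Fin 3) :
    fderiv ℝ (fun x' => ∫ p : R3 × R3, g3 a b c t x' y p) x (EuclideanSpace.single i (1 : ℝ))
      = ∫ p : R3 × R3, g3 (Dv (eX i) a) b c t x y p := by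
  obtain ⟨CA, hCA0, hCA⟩ := decay_aux (SchwartzMap.fderivCLM ℝ (ℝ × R3 × R3) ℂ a)
  obtain ⟨CB, hCB0, hCB⟩ := decay_aux b
  obtain ⟨CC, hCC0, hCC⟩ := decay_aux c
  have hLX : ‖(LX : R3 →L[ℝ] ℝ × R3 × R3)‖ ≤ 1 := by
    refine ContinuousLinearMap.opNorm_le_bound _ zero_le_one fun v => ?_
    have : ‖(LX : R3 →L[ℝ] ℝ × R3 × R3) v‖ = ‖v‖ := by simp [Prod.norm_def]
    rw [this, one_mul]
  have H : HasFDerivAt (fun x' => ∫ p : R3 × R3, g3 a b c t x' y p)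
      (∫ p : R3 × R3, (c (t, p.1, y) * starRingEnd ℂ (b (t, p.2, p.1)))
        • ((fderiv ℝ (a : (ℝ × R3 × R3) → ℂ) (t, x, p.2)).comp LX)) x := by
    refine hasFDerivAt_integral_of_dominated_of_fderiv_le (s := Metric.ball x 1)
      (F' := fun x' (p : R3 × R3) => (c (t, p.1, y) * starRingEnd ℂ (b (t, p.2, p.1)))
        • ((fderiv ℝ (a : (ℝ × R3 × R3) → ℂ) (t, x', p.2)).comp LX))
      (bound := fun p => (CC * CB * CA) * (((1 + ‖p.1‖) ^ 4)⁻¹ * ((1 + ‖p.2‖) ^ 4)⁻¹))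
      (Metric.ball_mem_nhds x one_pos) ?_ ?_ ?_ ?_ ?_ ?_
    · exact Filter.Eventually.of_forall fun x' => (cont_g3 a b c t x' y).aestronglyMeasurable
    · exact integrable_g3 a b c t x y
    · exact (integrable_fJx a b c t y x).aestronglyMeasurable
    · refine Filter.Eventually.of_forall fun p => fun x' _ => ?_
      have h1 : ‖c (t, p.1, y)‖ ≤ CC * ((1 + ‖p.1‖) ^ 4)⁻¹ :=
        div_bound (by positivity) (hCC t p.1 y).2.1
      have h2 : ‖b (t, p.2, p.1)‖ ≤ CB := (hCB t p.2 p.1).1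
      have h3 : ‖fderiv ℝ (a : (ℝ × R3 × R3) → ℂ) (t, x', p.2)‖ ≤ CA * ((1 + ‖p.2‖) ^ 4)⁻¹ := by
        have := div_bound (P := (1 + ‖p.2‖) ^ 4) (by positivity) (hCA t x' p.2).2.2
        rwa [SchwartzMap.fderivCLM_apply] at this
      calc ‖(c (t, p.1, y) * starRingEnd ℂ (b (t, p.2, p.1)))
          • ((fderiv ℝ (a : (ℝ × R3 × R3) → ℂ) (t, x', p.2)).comp LX)‖
          ≤ ‖c (t, p.1, y)‖ * ‖b (t, p.2, p.1)‖
            * ‖(fderiv ℝ (a : (ℝ × R3 × R3) → ℂ) (t, x', p.2)).comp LX‖ := by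
            refine le_trans (smul_clm_norm_le _ _) (le_of_eq ?_)
            rw [norm_mul, RCLike.norm_conj]
      _ ≤ ‖c (t, p.1, y)‖ * ‖b (t, p.2, p.1)‖
            * (‖fderiv ℝ (a : (ℝ × R3 × R3) → ℂ) (t, x', p.2)‖
              * ‖(LX : R3 →L[ℝ] ℝ × R3 × R3)‖) := by
            gcongr
            exact ContinuousLinearMap.opNorm_comp_le _ _
      _ ≤ (CC * ((1 + ‖p.1‖) ^ 4)⁻¹) * CB * ((CA * ((1 + ‖p.2‖) ^ 4)⁻¹) * 1) := by gcongr
      _ = (CC * CB * CA) * (((1 + ‖p.1‖) ^ 4)⁻¹ * ((1 + ‖p.2‖) ^ 4)⁻¹) := by ring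
    · exact int_dom2.const_mul _
    · refine Filter.Eventually.of_forall fun p => fun x' _ => ?_
      have h := hasFDerivAt_sliceX a t p.2 x'
      have := (h.mul_const (starRingEnd ℂ (b (t, p.2, p.1)))).mul_const (c (t, p.1, y))
      simpa [smul_smul, g3] using this
  rw [H.fderiv, ContinuousLinearMap.integral_apply (integrable_fJx a b c t y x)]
  refine integral_congr_ae (Filter.Eventually.of_forall fun p => ?_)
  simp only [ContinuousLinearMap.coe_smul', Pi.smul_apply, ContinuousLinearMap.coe_comp',
    Function.comp_apply, smul_eq_mul, g3, Dv_apply]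
  have : (LX : R3 →L[ℝ] ℝ × R3 × R3) (EuclideanSpace.single i (1 : ℝ))
      = ((0 : ℝ), EuclideanSpace.single i (1 : ℝ), (0 : R3)) := rfl
  rw [this]
  show c (t, p.1, y) * starRingEnd ℂ (b (t, p.2, p.1))
      * fderiv ℝ (a : (ℝ × R3 × R3) → ℂ) (t, x, p.2) (eX i) = _
  ring


lemma integrable_fJy (a b c : SM) (t : ℝ) (x : R3) (y : R3) :
    Integrable (fun p : R3 × R3 => (a (t, x, p.2) * starRingEnd ℂ (b (t, p.2, p.1)))
      • ((fderiv ℝ (c : (ℝ × R3 × R3) → ℂ) (t, p.1, y)).comp LY)) := by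
  obtain ⟨CA, hCA0, hCA⟩ := decay_aux a
  obtain ⟨CB, hCB0, hCB⟩ := decay_aux b
  obtain ⟨CC, hCC0, hCC⟩ := decay_aux (SchwartzMap.fderivCLM ℝ (ℝ × R3 × R3) ℂ c)
  have hLY : ‖(LY : R3 →L[ℝ] ℝ × R3 × R3)‖ ≤ 1 := by
    refine ContinuousLinearMap.opNorm_le_bound _ zero_le_one fun v => ?_
    have : ‖(LY : R3 →L[ℝ] ℝ × R3 × R3) v‖ = ‖v‖ := by simp [Prod.norm_def]
    rw [this, one_mul]
  have hcont : Continuous (fun p : R3 × R3 => (a (t, x, p.2) * starRingEnd ℂ (b (t, p.2, p.1)))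
      • ((fderiv ℝ (c : (ℝ × R3 × R3) → ℂ) (t, p.1, y)).comp LY)) := by
    have hc1 : Continuous fun p : R3 × R3 => a (t, x, p.2) * starRingEnd ℂ (b (t, p.2, p.1)) := by
      simp only [starRingEnd_apply]; fun_prop
    have hc2 : Continuous fun p : R3 × R3 =>
        (fderiv ℝ (c : (ℝ × R3 × R3) → ℂ) (t, p.1, y)).comp LY := by
      have hc3 : Continuous fun p : R3 × R3 => fderiv ℝ (c : (ℝ × R3 × R3) → ℂ) (t, p.1, y) := by
        have : (fun p : R3 × R3 => fderiv ℝ (c : (ℝ × R3 × R3) → ℂ) (t, p.1, y))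
            = fun p : R3 × R3 => (SchwartzMap.fderivCLM ℝ (ℝ × R3 × R3) ℂ c) (t, p.1, y) := by
          funext p; rw [SchwartzMap.fderivCLM_apply]
        rw [this]
        exact (SchwartzMap.fderivCLM ℝ (ℝ × R3 × R3) ℂ c).continuous.comp (by fun_prop)
      exact (((ContinuousLinearMap.compL ℝ R3 (ℝ × R3 × R3) ℂ).flip LY).continuous).comp hc3
    exact hc1.smul hc2
  refine Integrable.mono' (int_dom2.const_mul (CC * CB * CA)) hcont.aestronglyMeasurable
    (Filter.Eventually.of_forall fun p => ?_)
  have h1 : ‖a (t, x, p.2)‖ ≤ CA * ((1 + ‖p.2‖) ^ 4)⁻¹ :=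
    div_bound (by positivity) (hCA t x p.2).2.2
  have h2 : ‖b (t, p.2, p.1)‖ ≤ CB := (hCB t p.2 p.1).1
  have h3 : ‖fderiv ℝ (c : (ℝ × R3 × R3) → ℂ) (t, p.1, y)‖ ≤ CC * ((1 + ‖p.1‖) ^ 4)⁻¹ := by
    have := div_bound (P := (1 + ‖p.1‖) ^ 4) (by positivity) (hCC t p.1 y).2.1
    rwa [SchwartzMap.fderivCLM_apply] at this
  calc ‖(a (t, x, p.2) * starRingEnd ℂ (b (t, p.2, p.1)))
      • ((fderiv ℝ (c : (ℝ × R3 × R3) → ℂ) (t, p.1, y)).comp LY)‖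
      ≤ ‖a (t, x, p.2)‖ * ‖b (t, p.2, p.1)‖
        * ‖(fderiv ℝ (c : (ℝ × R3 × R3) → ℂ) (t, p.1, y)).comp LY‖ := by
        refine le_trans (smul_clm_norm_le _ _) (le_of_eq ?_)
        rw [norm_mul, RCLike.norm_conj]
  _ ≤ ‖a (t, x, p.2)‖ * ‖b (t, p.2, p.1)‖
        * (‖fderiv ℝ (c : (ℝ × R3 × R3) → ℂ) (t, p.1, y)‖ * ‖(LY : R3 →L[ℝ] ℝ × R3 × R3)‖) := by
        gcongr
        exact ContinuousLinearMap.opNorm_comp_le _ _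
  _ ≤ (CA * ((1 + ‖p.2‖) ^ 4)⁻¹) * CB * ((CC * ((1 + ‖p.1‖) ^ 4)⁻¹) * 1) := by gcongr
  _ = CC * CB * CA * (((1 + ‖p.1‖) ^ 4)⁻¹ * ((1 + ‖p.2‖) ^ 4)⁻¹) := by ring

lemma fderiv_J_y (a b c : SM) (t : ℝ) (x : R3) (y : R3) (i : Fin 3) :
    fderiv ℝ (fun y' => ∫ p : R3 × R3, g3 a b c t x y' p) y (EuclideanSpace.single i (1 : ℝ))
      = ∫ p : R3 × R3, g3 a b (Dv (eY i) c) t x y p := by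
  obtain ⟨CA, hCA0, hCA⟩ := decay_aux a
  obtain ⟨CB, hCB0, hCB⟩ := decay_aux b
  obtain ⟨CC, hCC0, hCC⟩ := decay_aux (SchwartzMap.fderivCLM ℝ (ℝ × R3 × R3) ℂ c)
  have hLY : ‖(LY : R3 →L[ℝ] ℝ × R3 × R3)‖ ≤ 1 := by
    refine ContinuousLinearMap.opNorm_le_bound _ zero_le_one fun v => ?_
    have : ‖(LY : R3 →L[ℝ] ℝ × R3 × R3) v‖ = ‖v‖ := by simp [Prod.norm_def]
    rw [this, one_mul]
  have H : HasFDerivAt (fun y' => ∫ p : R3 × R3, g3 a b c t x y' p)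
      (∫ p : R3 × R3, (a (t, x, p.2) * starRingEnd ℂ (b (t, p.2, p.1)))
        • ((fderiv ℝ (c : (ℝ × R3 × R3) → ℂ) (t, p.1, y)).comp LY)) y := by
    refine hasFDerivAt_integral_of_dominated_of_fderiv_le (s := Metric.ball y 1)
      (F' := fun y' (p : R3 × R3) => (a (t, x, p.2) * starRingEnd ℂ (b (t, p.2, p.1)))
        • ((fderiv ℝ (c : (ℝ × R3 × R3) → ℂ) (t, p.1, y')).comp LY))
      (bound := fun p => (CC * CB * CA) * (((1 + ‖p.1‖) ^ 4)⁻¹ * ((1 + ‖p.2‖) ^ 4)⁻¹))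
      (Metric.ball_mem_nhds y one_pos) ?_ ?_ ?_ ?_ ?_ ?_
    · exact Filter.Eventually.of_forall fun y' => (cont_g3 a b c t x y').aestronglyMeasurable
    · exact integrable_g3 a b c t x y
    · exact (integrable_fJy a b c t x y).aestronglyMeasurable
    · refine Filter.Eventually.of_forall fun p => fun y' _ => ?_
      have h1 : ‖a (t, x, p.2)‖ ≤ CA * ((1 + ‖p.2‖) ^ 4)⁻¹ :=
        div_bound (by positivity) (hCA t x p.2).2.2
      have h2 : ‖b (t, p.2, p.1)‖ ≤ CB := (hCB t p.2 p.1).1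
      have h3 : ‖fderiv ℝ (c : (ℝ × R3 × R3) → ℂ) (t, p.1, y')‖
          ≤ CC * ((1 + ‖p.1‖) ^ 4)⁻¹ := by
        have := div_bound (P := (1 + ‖p.1‖) ^ 4) (by positivity) (hCC t p.1 y').2.1
        rwa [SchwartzMap.fderivCLM_apply] at this
      calc ‖(a (t, x, p.2) * starRingEnd ℂ (b (t, p.2, p.1)))
          • ((fderiv ℝ (c : (ℝ × R3 × R3) → ℂ) (t, p.1, y')).comp LY)‖
          ≤ ‖a (t, x, p.2)‖ * ‖b (t, p.2, p.1)‖
            * ‖(fderiv ℝ (c : (ℝ × R3 × R3) → ℂ) (t, p.1, y')).comp LY‖ := by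
            refine le_trans (smul_clm_norm_le _ _) (le_of_eq ?_)
            rw [norm_mul, RCLike.norm_conj]
      _ ≤ ‖a (t, x, p.2)‖ * ‖b (t, p.2, p.1)‖
            * (‖fderiv ℝ (c : (ℝ × R3 × R3) → ℂ) (t, p.1, y')‖
              * ‖(LY : R3 →L[ℝ] ℝ × R3 × R3)‖) := by
            gcongr
            exact ContinuousLinearMap.opNorm_comp_le _ _
      _ ≤ (CA * ((1 + ‖p.2‖) ^ 4)⁻¹) * CB * ((CC * ((1 + ‖p.1‖) ^ 4)⁻¹) * 1) := by gcongr
      _ = (CC * CB * CA) * (((1 + ‖p.1‖) ^ 4)⁻¹ * ((1 + ‖p.2‖) ^ 4)⁻¹) := by ring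
    · exact int_dom2.const_mul _
    · refine Filter.Eventually.of_forall fun p => fun y' _ => ?_
      have h := hasFDerivAt_sliceY c t p.1 y'
      exact (h.const_mul (a (t, x, p.2) * starRingEnd ℂ (b (t, p.2, p.1))))
  rw [H.fderiv, ContinuousLinearMap.integral_apply (integrable_fJy a b c t x y)]
  refine integral_congr_ae (Filter.Eventually.of_forall fun p => ?_)
  simp only [ContinuousLinearMap.coe_smul', Pi.smul_apply, ContinuousLinearMap.coe_comp',
    Function.comp_apply, smul_eq_mul, g3, Dv_apply]
  have : (LY : R3 →L[ℝ] ℝ × R3 × R3) (EuclideanSpace.single i (1 : ℝ))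
      = ((0 : ℝ), (0 : R3), EuclideanSpace.single i (1 : ℝ)) := rfl
  rw [this]
  show a (t, x, p.2) * starRingEnd ℂ (b (t, p.2, p.1))
      * fderiv ℝ (c : (ℝ × R3 × R3) → ℂ) (t, p.1, y) (eY i) = _
  ring

lemma lap3_J_x (a b c : SM) (t : ℝ) (y : R3) (x : R3) :
    lap3 (fun x' => ∫ p : R3 × R3, g3 a b c t x' y p) x
      = ∑ i : Fin 3, ∫ p : R3 × R3, g3 (Dv (eX i) (Dv (eX i) a)) b c t x y p := by
  unfold lap3
  refine Finset.sum_congr rfl fun i _ => ?_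
  have h1 : (fun z => fderiv ℝ (fun x' => ∫ p : R3 × R3, g3 a b c t x' y p) z
      (EuclideanSpace.single i (1 : ℝ)))
      = fun z => ∫ p : R3 × R3, g3 (Dv (eX i) a) b c t z y p :=
    funext fun z => fderiv_J_x a b c t y z i
  rw [h1, fderiv_J_x]

lemma lap3_J_y (a b c : SM) (t : ℝ) (x : R3) (y : R3) :
    lap3 (fun y' => ∫ p : R3 × R3, g3 a b c t x y' p) y
      = ∑ i : Fin 3, ∫ p : R3 × R3, g3 a b (Dv (eY i) (Dv (eY i) c)) t x y p := by
  unfold lap3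
  refine Finset.sum_congr rfl fun i _ => ?_
  have h1 : (fun z => fderiv ℝ (fun y' => ∫ p : R3 × R3, g3 a b c t x y' p) z
      (EuclideanSpace.single i (1 : ℝ)))
      = fun z => ∫ p : R3 × R3, g3 a b (Dv (eY i) c) t x z p :=
    funext fun z => fderiv_J_y a b c t x z i
  rw [h1, fderiv_J_y]


lemma IBP_w (a b c : SM) (t : ℝ) (x y : R3) (i : Fin 3) :
    ∫ p : R3 × R3, g3 (Dv (eY i) (Dv (eY i) a)) b c t x y p
      = ∫ p : R3 × R3, g3 a (Dv (eX i) (Dv (eX i) b)) c t x y p := by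
  rw [show (volume : Measure (R3 × R3)) = (volume : Measure R3).prod volume from
    MeasureTheory.Measure.volume_eq_prod R3 R3]
  rw [integral_prod _ ((MeasureTheory.Measure.volume_eq_prod R3 R3)
      ▸ integrable_g3 (Dv (eY i) (Dv (eY i) a)) b c t x y),
    integral_prod _ ((MeasureTheory.Measure.volume_eq_prod R3 R3)
      ▸ integrable_g3 a (Dv (eX i) (Dv (eX i) b)) c t x y)]
  refine integral_congr_ae (Filter.Eventually.of_forall fun z => ?_)
  simp only [g3, mul_assoc]
  exact ibpW a b i t x z (c (t, z, y))

lemma IBP_z (a b c : SM) (t : ℝ) (x y : R3) (i : Fin 3) :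
    ∫ p : R3 × R3, g3 a (Dv (eY i) (Dv (eY i) b)) c t x y p
      = ∫ p : R3 × R3, g3 a b (Dv (eX i) (Dv (eX i) c)) t x y p := by
  rw [show (volume : Measure (R3 × R3)) = (volume : Measure R3).prod volume from
    MeasureTheory.Measure.volume_eq_prod R3 R3]
  rw [integral_prod_symm _ ((MeasureTheory.Measure.volume_eq_prod R3 R3)
      ▸ integrable_g3 a (Dv (eY i) (Dv (eY i) b)) c t x y),
    integral_prod_symm _ ((MeasureTheory.Measure.volume_eq_prod R3 R3)
      ▸ integrable_g3 a b (Dv (eX i) (Dv (eX i) c)) t x y)]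
  refine integral_congr_ae (Filter.Eventually.of_forall fun w => ?_)
  simp only [g3]
  exact ibpZ b c i t w y (a (t, x, w))

lemma J_comb (μc : ℂ) (A B0 B1 B2 C0 C1 C2 : (R3 × R3) → ℂ)
    (hA : Integrable A) (hB0 : Integrable B0) (hB1 : Integrable B1) (hB2 : Integrable B2)
    (hC0 : Integrable C0) (hC1 : Integrable C1) (hC2 : Integrable C2) :
    ∫ p : R3 × R3, (μc * A p - (B0 p + B1 p + B2 p) - (C0 p + C1 p + C2 p))
      = μc * (∫ p : R3 × R3, A p)
        - ((∫ p : R3 × R3, B0 p) + (∫ p : R3 × R3, B1 p) + ∫ p : R3 × R3, B2 p)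
        - ((∫ p : R3 × R3, C0 p) + (∫ p : R3 × R3, C1 p) + ∫ p : R3 × R3, C2 p) := by
  have hB : Integrable (fun p => B0 p + B1 p + B2 p) := (hB0.add hB1).add hB2
  have hC : Integrable (fun p => C0 p + C1 p + C2 p) := (hC0.add hC1).add hC2
  have hf : Integrable (fun p => μc * A p - (B0 p + B1 p + B2 p)) := (hA.const_mul μc).sub hB
  have e1 : (∫ p : R3 × R3, (μc * A p - (B0 p + B1 p + B2 p) - (C0 p + C1 p + C2 p)))
      = (∫ p : R3 × R3, (μc * A p - (B0 p + B1 p + B2 p)))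
        - ∫ p : R3 × R3, (C0 p + C1 p + C2 p) := integral_sub hf hC
  have e2 : (∫ p : R3 × R3, (μc * A p - (B0 p + B1 p + B2 p)))
      = (∫ p : R3 × R3, μc * A p) - ∫ p : R3 × R3, (B0 p + B1 p + B2 p) :=
    integral_sub (hA.const_mul μc) hB
  have e3 : (∫ p : R3 × R3, μc * A p) = μc * ∫ p : R3 × R3, A p := integral_const_mul μc A
  have e4 : (∫ p : R3 × R3, (B0 p + B1 p + B2 p))
      = ((∫ p : R3 × R3, B0 p) + ∫ p : R3 × R3, B1 p) + ∫ p : R3 × R3, B2 p := by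
    rw [show (∫ p : R3 × R3, (B0 p + B1 p + B2 p))
        = (∫ p : R3 × R3, (B0 p + B1 p)) + ∫ p : R3 × R3, B2 p from
      integral_add (hB0.add hB1) hB2, integral_add hB0 hB1]
  have e5 : (∫ p : R3 × R3, (C0 p + C1 p + C2 p))
      = ((∫ p : R3 × R3, C0 p) + ∫ p : R3 × R3, C1 p) + ∫ p : R3 × R3, C2 p := by
    rw [show (∫ p : R3 × R3, (C0 p + C1 p + C2 p))
        = (∫ p : R3 × R3, (C0 p + C1 p)) + ∫ p : R3 × R3, C2 p from
      integral_add (hC0.add hC1) hC2, integral_add hC0 hC1]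
  rw [e1, e2, e3, e4, e5]

lemma J_SK_left (a b c : SM) (t : ℝ) (x y : R3) :
    ∫ p : R3 × R3, g3 (SK a) b c t x y p
      = Complex.I * (∫ p : R3 × R3, g3 (Dv e0 a) b c t x y p)
        - ((∫ p : R3 × R3, g3 (Dv (eX 0) (Dv (eX 0) a)) b c t x y p)
          + (∫ p : R3 × R3, g3 (Dv (eX 1) (Dv (eX 1) a)) b c t x y p)
          + ∫ p : R3 × R3, g3 (Dv (eX 2) (Dv (eX 2) a)) b c t x y p)
        - ((∫ p : R3 × R3, g3 (Dv (eY 0) (Dv (eY 0) a)) b c t x y p)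
          + (∫ p : R3 × R3, g3 (Dv (eY 1) (Dv (eY 1) a)) b c t x y p)
          + ∫ p : R3 × R3, g3 (Dv (eY 2) (Dv (eY 2) a)) b c t x y p) := by
  have hpt : ∀ p : R3 × R3, g3 (SK a) b c t x y p
      = Complex.I * g3 (Dv e0 a) b c t x y p
        - (g3 (Dv (eX 0) (Dv (eX 0) a)) b c t x y p + g3 (Dv (eX 1) (Dv (eX 1) a)) b c t x y p
          + g3 (Dv (eX 2) (Dv (eX 2) a)) b c t x y p)
        - (g3 (Dv (eY 0) (Dv (eY 0) a)) b c t x y p + g3 (Dv (eY 1) (Dv (eY 1) a)) b c t x y p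
          + g3 (Dv (eY 2) (Dv (eY 2) a)) b c t x y p) := fun p => by
    simp only [g3, SK, SchwartzMap.sub_apply, SchwartzMap.smul_apply, SchwartzMap.add_apply,
      SM_sum_apply, smul_eq_mul, Fin.sum_univ_three]
    ring
  rw [integral_congr_ae (Filter.Eventually.of_forall hpt)]
  exact J_comb _ _ _ _ _ _ _ _ (integrable_g3 _ _ _ t x y) (integrable_g3 _ _ _ t x y)
    (integrable_g3 _ _ _ t x y) (integrable_g3 _ _ _ t x y) (integrable_g3 _ _ _ t x y)
    (integrable_g3 _ _ _ t x y) (integrable_g3 _ _ _ t x y)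

lemma J_SK_mid (a b c : SM) (t : ℝ) (x y : R3) :
    ∫ p : R3 × R3, g3 a (SK b) c t x y p
      = -Complex.I * (∫ p : R3 × R3, g3 a (Dv e0 b) c t x y p)
        - ((∫ p : R3 × R3, g3 a (Dv (eX 0) (Dv (eX 0) b)) c t x y p)
          + (∫ p : R3 × R3, g3 a (Dv (eX 1) (Dv (eX 1) b)) c t x y p)
          + ∫ p : R3 × R3, g3 a (Dv (eX 2) (Dv (eX 2) b)) c t x y p)
        - ((∫ p : R3 × R3, g3 a (Dv (eY 0) (Dv (eY 0) b)) c t x y p)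
          + (∫ p : R3 × R3, g3 a (Dv (eY 1) (Dv (eY 1) b)) c t x y p)
          + ∫ p : R3 × R3, g3 a (Dv (eY 2) (Dv (eY 2) b)) c t x y p) := by
  have hpt : ∀ p : R3 × R3, g3 a (SK b) c t x y p
      = -Complex.I * g3 a (Dv e0 b) c t x y p
        - (g3 a (Dv (eX 0) (Dv (eX 0) b)) c t x y p + g3 a (Dv (eX 1) (Dv (eX 1) b)) c t x y p
          + g3 a (Dv (eX 2) (Dv (eX 2) b)) c t x y p)
        - (g3 a (Dv (eY 0) (Dv (eY 0) b)) c t x y p + g3 a (Dv (eY 1) (Dv (eY 1) b)) c t x y p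
          + g3 a (Dv (eY 2) (Dv (eY 2) b)) c t x y p) := fun p => by
    simp only [g3, SK, SchwartzMap.sub_apply, SchwartzMap.smul_apply, SchwartzMap.add_apply,
      SM_sum_apply, smul_eq_mul, Fin.sum_univ_three, map_sub, map_add, map_mul, Complex.conj_I]
    ring
  rw [integral_congr_ae (Filter.Eventually.of_forall hpt)]
  exact J_comb _ _ _ _ _ _ _ _ (integrable_g3 _ _ _ t x y) (integrable_g3 _ _ _ t x y)
    (integrable_g3 _ _ _ t x y) (integrable_g3 _ _ _ t x y) (integrable_g3 _ _ _ t x y)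
    (integrable_g3 _ _ _ t x y) (integrable_g3 _ _ _ t x y)

lemma J_SK_right (a b c : SM) (t : ℝ) (x y : R3) :
    ∫ p : R3 × R3, g3 a b (SK c) t x y p
      = Complex.I * (∫ p : R3 × R3, g3 a b (Dv e0 c) t x y p)
        - ((∫ p : R3 × R3, g3 a b (Dv (eX 0) (Dv (eX 0) c)) t x y p)
          + (∫ p : R3 × R3, g3 a b (Dv (eX 1) (Dv (eX 1) c)) t x y p)
          + ∫ p : R3 × R3, g3 a b (Dv (eX 2) (Dv (eX 2) c)) t x y p)
        - ((∫ p : R3 × R3, g3 a b (Dv (eY 0) (Dv (eY 0) c)) t x y p)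
          + (∫ p : R3 × R3, g3 a b (Dv (eY 1) (Dv (eY 1) c)) t x y p)
          + ∫ p : R3 × R3, g3 a b (Dv (eY 2) (Dv (eY 2) c)) t x y p) := by
  have hpt : ∀ p : R3 × R3, g3 a b (SK c) t x y p
      = Complex.I * g3 a b (Dv e0 c) t x y p
        - (g3 a b (Dv (eX 0) (Dv (eX 0) c)) t x y p + g3 a b (Dv (eX 1) (Dv (eX 1) c)) t x y p
          + g3 a b (Dv (eX 2) (Dv (eX 2) c)) t x y p)
        - (g3 a b (Dv (eY 0) (Dv (eY 0) c)) t x y p + g3 a b (Dv (eY 1) (Dv (eY 1) c)) t x y p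
          + g3 a b (Dv (eY 2) (Dv (eY 2) c)) t x y p) := fun p => by
    simp only [g3, SK, SchwartzMap.sub_apply, SchwartzMap.smul_apply, SchwartzMap.add_apply,
      SM_sum_apply, smul_eq_mul, Fin.sum_univ_three]
    ring
  rw [integral_congr_ae (Filter.Eventually.of_forall hpt)]
  exact J_comb _ _ _ _ _ _ _ _ (integrable_g3 _ _ _ t x y) (integrable_g3 _ _ _ t x y)
    (integrable_g3 _ _ _ t x y) (integrable_g3 _ _ _ t x y) (integrable_g3 _ _ _ t x y)
    (integrable_g3 _ _ _ t x y) (integrable_g3 _ _ _ t x y)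

lemma J_deriv (a b c : SM) (x y : R3) (t : ℝ) :
    deriv (fun s => ∫ p : R3 × R3, g3 a b c s x y p) t
      = (∫ p : R3 × R3, g3 (Dv e0 a) b c t x y p)
        + (∫ p : R3 × R3, g3 a (Dv e0 b) c t x y p)
        + ∫ p : R3 × R3, g3 a b (Dv e0 c) t x y p := by
  rw [(hasDerivAt_J a b c x y t).deriv]
  rw [show (∫ p : R3 × R3, (g3 (Dv e0 a) b c t x y p + g3 a (Dv e0 b) c t x y p
        + g3 a b (Dv e0 c) t x y p))
      = (∫ p : R3 × R3, (g3 (Dv e0 a) b c t x y p + g3 a (Dv e0 b) c t x y p))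
        + ∫ p : R3 × R3, g3 a b (Dv e0 c) t x y p from
    integral_add ((integrable_g3 (Dv e0 a) b c t x y).add (integrable_g3 a (Dv e0 b) c t x y))
      (integrable_g3 a b (Dv e0 c) t x y),
    integral_add (integrable_g3 (Dv e0 a) b c t x y) (integrable_g3 a (Dv e0 b) c t x y)]

end Aux17

/-- Leibniz-type identity for `S = i∂_t − Δ_x − Δ_y` on a triple composition
`k₁ ∘ conj(k₂) ∘ k₃` of Schwartz kernels:
`S(k₁ ∘ conj(k₂) ∘ k₃) = (S k₁) ∘ conj(k₂) ∘ k₃ − k₁ ∘ conj(S k₂) ∘ k₃ + k₁ ∘ conj(k₂) ∘ (S k₃)`. -/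
theorem stmt_17 (k₁ k₂ k₃ : SchwartzMap (ℝ × R3 × R3) ℂ) (t : ℝ) (x y : R3) :
    Sop (tComp (tComp (fun s a b => k₁ (s, a, b)) (tConj fun s a b => k₂ (s, a, b)))
        (fun s a b => k₃ (s, a, b))) t x y
      = tComp (tComp (Sop fun s a b => k₁ (s, a, b)) (tConj fun s a b => k₂ (s, a, b)))
          (fun s a b => k₃ (s, a, b)) t x y
        - tComp (tComp (fun s a b => k₁ (s, a, b)) (tConj (Sop fun s a b => k₂ (s, a, b))))
            (fun s a b => k₃ (s, a, b)) t x y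
        + tComp (tComp (fun s a b => k₁ (s, a, b)) (tConj fun s a b => k₂ (s, a, b)))
            (Sop fun s a b => k₃ (s, a, b)) t x y := by
  have hSop1 : (Sop fun s a b => k₁ (s, a, b)) = fun s a b => (Aux17.SK k₁) (s, a, b) := by
    funext s p q; exact Aux17.Sop_slice k₁ s p q
  have hSop2 : (Sop fun s a b => k₂ (s, a, b)) = fun s a b => (Aux17.SK k₂) (s, a, b) := by
    funext s p q; exact Aux17.Sop_slice k₂ s p q
  have hSop3 : (Sop fun s a b => k₃ (s, a, b)) = fun s a b => (Aux17.SK k₃) (s, a, b) := by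
    funext s p q; exact Aux17.Sop_slice k₃ s p q
  rw [hSop1, hSop2, hSop3]
  rw [Aux17.tComp_eq k₁ k₂ k₃, Aux17.tComp_eq (Aux17.SK k₁) k₂ k₃,
    Aux17.tComp_eq k₁ (Aux17.SK k₂) k₃, Aux17.tComp_eq k₁ k₂ (Aux17.SK k₃)]
  beta_reduce
  simp only [Sop]
  rw [Aux17.J_deriv k₁ k₂ k₃ x y t, Aux17.lap3_J_x k₁ k₂ k₃ t y x,
    Aux17.lap3_J_y k₁ k₂ k₃ t x y, Aux17.J_SK_left k₁ k₂ k₃ t x y,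
    Aux17.J_SK_mid k₁ k₂ k₃ t x y, Aux17.J_SK_right k₁ k₂ k₃ t x y,
    Fin.sum_univ_three, Fin.sum_univ_three]
  rw [Aux17.IBP_w k₁ k₂ k₃ t x y 0, Aux17.IBP_w k₁ k₂ k₃ t x y 1, Aux17.IBP_w k₁ k₂ k₃ t x y 2,
    Aux17.IBP_z k₁ k₂ k₃ t x y 0, Aux17.IBP_z k₁ k₂ k₃ t x y 1, Aux17.IBP_z k₁ k₂ k₃ t x y 2]
  ring

end
end
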